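/- Let X and Y be pointed topological spaces with maps f : X → Y and g : Y → X such that g ∘ f is the identity on X. Then the homotopy fiber of f is weakly homotopy equivalent to the loop space of the homotopy fiber of g. -/

import Mathlib

noncomputable section
open unitInterval CategoryTheory

/-- The homotopy fiber of `f : X → Y` over `y : Y`. -/
def HFiber {X Y : Type} [TopologicalSpace X] [TopologicalSpace Y] (f : C(X, Y)) (y : Y) : Type :=
  { p : X × C(I, Y) // p.2 0 = f p.1 ∧ p.2 1 = y }

instance {X Y : Type} [TopologicalSpace X] [TopologicalSpace Y] (f : C(X, Y)) (y : Y) :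
    TopologicalSpace (HFiber f y) :=
  instTopologicalSpaceSubtype

/-- The based loop space of `Z` at `z`. -/
def LoopSp (Z : Type) [TopologicalSpace Z] (z : Z) : Type :=
  { γ : C(I, Z) // γ 0 = z ∧ γ 1 = z }

instance (Z : Type) [TopologicalSpace Z] (z : Z) : TopologicalSpace (LoopSp Z z) :=
  instTopologicalSpaceSubtype

/-- `X` is `n`-connected (`n : ℤ`): nonempty if `n ≥ -1`, and all homotopy groups in
degrees `≤ n` are trivial (at every basepoint). -/
def IsConnSpace (n : ℤ) (X : Type) [TopologicalSpace X] : Prop :=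
  (-1 ≤ n → Nonempty X) ∧
    ∀ (x : X) (i : ℕ), (i : ℤ) ≤ n → Subsingleton (HomotopyGroup (Fin i) X x)

/-- A map is `k`-connected if all of its homotopy fibers are `(k-1)`-connected. -/
def IsConnMap (k : ℤ) {X Y : Type} [TopologicalSpace X] [TopologicalSpace Y] (f : C(X, Y)) : Prop :=
  ∀ y : Y, IsConnSpace (k - 1) (HFiber f y)

/-- A weak homotopy equivalence is an `∞`-connected map. -/
def IsWeakEquiv {X Y : Type} [TopologicalSpace X] [TopologicalSpace Y] (f : C(X, Y)) : Prop :=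
  ∀ k : ℤ, IsConnMap k f

/-- Two spaces are weakly homotopy equivalent if there is a weak equivalence between
them in one direction or the other. -/
def WeakHomotopyEquivalent (X Y : Type) [TopologicalSpace X] [TopologicalSpace Y] : Prop :=
  (∃ f : C(X, Y), IsWeakEquiv f) ∨ (∃ g : C(Y, X), IsWeakEquiv g)


def clamp (r : ℝ) : I := Set.projIcc 0 1 zero_le_one r

lemma continuous_clamp : Continuous clamp := continuous_projIcc (h := zero_le_one)

@[simp] lemma clamp_coe (t : I) : clamp (t : ℝ) = t := by
  simp [clamp, Set.projIcc_of_mem zero_le_one t.2]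

lemma clamp_of_nonpos {r : ℝ} (h : r ≤ 0) : clamp r = 0 := by
  rw [clamp, Set.projIcc_of_le_left _ h]; rfl

lemma clamp_of_one_le {r : ℝ} (h : 1 ≤ r) : clamp r = 1 := by
  rw [clamp, Set.projIcc_of_right_le _ h]; rfl

lemma clamp_eq_zero_iff {r : ℝ} : clamp r = 0 ↔ r ≤ 0 := by
  have := Set.projIcc_eq_left (x := r) (h := zero_lt_one)
  rw [clamp]
  rw [show (0 : I) = ⟨0, Set.left_mem_Icc.2 zero_le_one⟩ from rfl]
  exact this

lemma clamp_eq_one_iff {r : ℝ} : clamp r = 1 ↔ 1 ≤ r := by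
  have := Set.projIcc_eq_right (x := r) (h := zero_lt_one)
  rw [clamp]
  rw [show (1 : I) = ⟨1, Set.right_mem_Icc.2 zero_le_one⟩ from rfl]
  exact this

lemma clamp_coe_mem {r : ℝ} (h0 : 0 ≤ r) (h1 : r ≤ 1) : ((clamp r : I) : ℝ) = r := by
  simp [clamp, Set.projIcc_of_mem zero_le_one ⟨h0, h1⟩]

lemma min_eq_one_sub_abs (t : ℝ) : min (2*t) (2-2*t) = 1 - |1-2*t| := by
  rcases le_total (1-2*t) 0 with h | h
  · rw [abs_of_nonpos h, min_eq_right (by linarith)]; ring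
  · rw [abs_of_nonneg h, min_eq_left (by linarith)]; ring

@[simp] lemma clamp_zero : clamp 0 = 0 := clamp_of_nonpos le_rfl
@[simp] lemma clamp_one : clamp 1 = 1 := clamp_of_one_le le_rfl

def Ctr (Z : Type) [TopologicalSpace Z] : Prop :=
  ∃ (z : Z) (H : C(I × Z, Z)), (∀ w, H (0, w) = w) ∧ (∀ w, H (1, w) = z)

section LemmaA

variable {Z : Type} [TopologicalSpace Z]

/-- auxiliary bump function -/
def bump (r : ℝ) : ℝ := max 0 (min 1 (4 * min r (1 - r)))

lemma continuous_bump : Continuous bump := by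
  unfold bump; fun_prop

lemma bump_nonneg (r : ℝ) : 0 ≤ bump r := le_max_left _ _

lemma bump_le_one (r : ℝ) : bump r ≤ 1 := by
  unfold bump
  rcases le_or_gt (min 1 (4 * min r (1 - r))) 0 with h | h
  · rw [max_eq_left h]; exact zero_le_one
  · rw [max_eq_right h.le]; exact min_le_left _ _

@[simp] lemma bump_zero : bump 0 = 0 := by norm_num [bump]
@[simp] lemma bump_one : bump 1 = 0 := by norm_num [bump]

lemma bump_eq_one {r : ℝ} (h1 : 1/4 ≤ r) (h2 : r ≤ 3/4) : bump r = 1 := by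
  have : (1 : ℝ) ≤ 4 * min r (1 - r) := by
    rcases min_cases r (1 - r) with ⟨hm, _⟩ | ⟨hm, _⟩ <;> rw [hm] <;> linarith
  unfold bump
  rw [min_eq_left this, max_eq_right zero_le_one]

/-- the boundary-bump function on the cube -/
def cubePhi {n : ℕ} (y : Fin n → I) : ℝ := ∏ i, bump (y i)

lemma continuous_cubePhi {n : ℕ} : Continuous (cubePhi (n := n)) := by
  apply continuous_finset_prod
  intro i _
  exact continuous_bump.comp (continuous_subtype_val.comp (continuous_apply i))

lemma cubePhi_nonneg {n : ℕ} (y : Fin n → I) : 0 ≤ cubePhi y :=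
  Finset.prod_nonneg fun i _ => bump_nonneg _

lemma cubePhi_le_one {n : ℕ} (y : Fin n → I) : cubePhi y ≤ 1 :=
  Finset.prod_le_one (fun i _ => bump_nonneg _) (fun i _ => bump_le_one _)

lemma cubePhi_boundary {n : ℕ} {y : Fin n → I} (h : y ∈ Cube.boundary (Fin n)) :
    cubePhi y = 0 := by
  obtain ⟨i, hi | hi⟩ := h <;>
    exact Finset.prod_eq_zero (Finset.mem_univ i) (by rw [hi]; simp)

/-- the radial expansion map on the cube -/
def cubeR {n : ℕ} (y : Fin n → I) : Fin n → I := fun i => clamp (2 * (y i) - 1/2)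

lemma continuous_cubeR {n : ℕ} : Continuous (cubeR (n := n)) := by
  apply continuous_pi
  intro i
  apply continuous_clamp.comp
  have : Continuous fun y : Fin n → I => ((y i : ℝ)) :=
    continuous_subtype_val.comp (continuous_apply i)
  fun_prop

lemma cubeR_boundary_of_not {n : ℕ} {y : Fin n → I} (h : cubeR y ∉ Cube.boundary (Fin n)) :
    cubePhi y = 1 := by
  apply Finset.prod_eq_one
  intro i _
  have hi0 : cubeR y i ≠ 0 := fun hc => h ⟨i, Or.inl hc⟩
  have hi1 : cubeR y i ≠ 1 := fun hc => h ⟨i, Or.inr hc⟩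
  rw [cubeR] at hi0 hi1
  have h0 : ¬ (2 * ((y i : ℝ)) - 1/2 ≤ 0) := fun hc => hi0 (clamp_of_nonpos hc)
  have h1 : ¬ (1 ≤ 2 * ((y i : ℝ)) - 1/2) := fun hc => hi1 (clamp_of_one_le hc)
  push_neg at h0 h1
  apply bump_eq_one <;> [skip; skip] <;> nlinarith [(y i).2.1, (y i).2.2]

lemma genloop_null {Z : Type} [TopologicalSpace Z] (hZ : Ctr Z) {n : ℕ} (x : Z)
    (p : C((Fin n → I), Z)) (hp : ∀ y ∈ Cube.boundary (Fin n), p y = x) :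
    p.HomotopicRel (ContinuousMap.const _ x) (Cube.boundary (Fin n)) := by
  obtain ⟨z, H, H0, H1⟩ := hZ
  -- the interpolation map for homotopy 1
  set Q : I × (Fin n → I) → (Fin n → I) :=
    fun w i => clamp ((w.2 i : ℝ) + (w.1 : ℝ) * ((w.2 i : ℝ) - 1/2)) with hQ
  have hQcont : Continuous Q := by
    apply continuous_pi
    intro i
    apply continuous_clamp.comp
    have h1 : Continuous fun w : I × (Fin n → I) => ((w.2 i : ℝ)) :=
      continuous_subtype_val.comp ((continuous_apply i).comp continuous_snd)
    have h2 : Continuous fun w : I × (Fin n → I) => ((w.1 : ℝ)) :=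
      continuous_subtype_val.comp continuous_fst
    fun_prop
  have hQbd : ∀ (u : I) (y : Fin n → I), y ∈ Cube.boundary (Fin n) →
      Q (u, y) ∈ Cube.boundary (Fin n) := by
    rintro u y ⟨i, hi | hi⟩
    · refine ⟨i, Or.inl ?_⟩
      simp only [hQ, hi]
      apply clamp_of_nonpos
      have := u.2.1
      have : (u : ℝ) * (0 - 1/2) ≤ 0 := by nlinarith [u.2.1]
      simpa using this
    · refine ⟨i, Or.inr ?_⟩
      simp only [hQ, hi]
      apply clamp_of_one_le
      have : 0 ≤ (u : ℝ) * ((1:ℝ) - 1/2) := by nlinarith [u.2.1]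
      push_cast
      linarith
  have hQ0 : ∀ y, Q (0, y) = y := by
    intro y; funext i; simp [hQ]
  have hQ1 : ∀ y, Q (1, y) = cubeR y := by
    intro y; funext i
    simp only [hQ, cubeR]
    norm_num
    ring_nf
  -- homotopy 1 : p ≃ p ∘ cubeR
  have F1 : p.HomotopicRel (p.comp ⟨cubeR, continuous_cubeR⟩) (Cube.boundary (Fin n)) := by
    refine ⟨⟨⟨⟨fun w => p (Q w), p.continuous.comp hQcont⟩, ?_, ?_⟩, ?_⟩⟩
    · intro y; simp [hQ0]
    · intro y; simp [hQ1]
    · intro u y hy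
      simp only [ContinuousMap.coe_mk]
      rw [hp _ (hQbd u y hy), hp _ hy]
  -- homotopy 2 : p ∘ cubeR ≃ B
  have memI : ∀ (u : I) (y : Fin n → I), (u : ℝ) * cubePhi y ∈ Set.Icc (0:ℝ) 1 :=
    fun u y => ⟨mul_nonneg u.2.1 (cubePhi_nonneg y),
      mul_le_one₀ u.2.2 (cubePhi_nonneg y) (cubePhi_le_one y)⟩
  set B : C((Fin n → I), Z) :=
    ⟨fun y => H (⟨cubePhi y, cubePhi_nonneg y, cubePhi_le_one y⟩, p (cubeR y)), by
      apply H.continuous.comp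
      apply Continuous.prodMk
      · exact (continuous_cubePhi.subtype_mk _)
      · exact p.continuous.comp continuous_cubeR⟩ with hB
  have F2 : (p.comp ⟨cubeR, continuous_cubeR⟩).HomotopicRel B (Cube.boundary (Fin n)) := by
    refine ⟨⟨⟨⟨fun w => H (⟨(w.1 : ℝ) * cubePhi w.2, memI w.1 w.2⟩, p (cubeR w.2)), ?_⟩, ?_, ?_⟩, ?_⟩⟩
    · apply H.continuous.comp
      apply Continuous.prodMk
      · apply Continuous.subtype_mk
        exact (continuous_subtype_val.comp continuous_fst).mul
          (continuous_cubePhi.comp continuous_snd)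
      · exact p.continuous.comp (continuous_cubeR.comp continuous_snd)
    · intro y
      have e : (⟨((0:I) : ℝ) * cubePhi y, memI 0 y⟩ : I) = 0 := by
        ext; simp
      show H (⟨((0:I) : ℝ) * cubePhi y, memI 0 y⟩, p (cubeR y)) = _
      rw [e, H0]
      rfl
    · intro y
      have e : (⟨((1:I) : ℝ) * cubePhi y, memI 1 y⟩ : I) =
          ⟨cubePhi y, cubePhi_nonneg y, cubePhi_le_one y⟩ := by
        ext; simp
      show H (⟨((1:I) : ℝ) * cubePhi y, memI 1 y⟩, p (cubeR y)) = B y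
      rw [e]
      rfl
    · intro u y hy
      simp only [ContinuousMap.coe_mk]
      have : (⟨(u : ℝ) * cubePhi y, memI u y⟩ : I) = 0 := by
        ext; simp [cubePhi_boundary hy]
      rw [this, H0]
      rfl
  -- B equals B', built only from the track of x
  set B' : C((Fin n → I), Z) :=
    ⟨fun y => H (⟨cubePhi y, cubePhi_nonneg y, cubePhi_le_one y⟩, x), by
      apply H.continuous.comp
      apply Continuous.prodMk
      · exact (continuous_cubePhi.subtype_mk _)
      · exact continuous_const⟩ with hB'
  have hBB' : B = B' := by
    ext y
    simp only [hB, hB', ContinuousMap.coe_mk]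
    by_cases hyb : cubeR y ∈ Cube.boundary (Fin n)
    · rw [hp _ hyb]
    · have h1 : cubePhi y = 1 := cubeR_boundary_of_not hyb
      have e1 : (⟨cubePhi y, cubePhi_nonneg y, cubePhi_le_one y⟩ : I) = 1 := by
        ext; simp [h1]
      rw [e1, H1, H1]
  have memI' : ∀ (u : I) (y : Fin n → I), (1 - (u : ℝ)) * cubePhi y ∈ Set.Icc (0:ℝ) 1 :=
    fun u y => ⟨mul_nonneg (by linarith [u.2.2]) (cubePhi_nonneg y),
      mul_le_one₀ (by linarith [u.2.1]) (cubePhi_nonneg y) (cubePhi_le_one y)⟩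
  have F3 : B'.HomotopicRel (ContinuousMap.const _ x) (Cube.boundary (Fin n)) := by
    refine ⟨⟨⟨⟨fun w => H (⟨(1 - (w.1 : ℝ)) * cubePhi w.2, memI' w.1 w.2⟩, x), ?_⟩, ?_, ?_⟩, ?_⟩⟩
    · apply H.continuous.comp
      apply Continuous.prodMk
      · apply Continuous.subtype_mk
        exact (continuous_const.sub (continuous_subtype_val.comp continuous_fst)).mul
          (continuous_cubePhi.comp continuous_snd)
      · exact continuous_const
    · intro y
      have e : (⟨(1 - ((0:I) : ℝ)) * cubePhi y, memI' 0 y⟩ : I) =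
          ⟨cubePhi y, cubePhi_nonneg y, cubePhi_le_one y⟩ := by
        ext; simp
      show H (⟨(1 - ((0:I) : ℝ)) * cubePhi y, memI' 0 y⟩, x) = B' y
      rw [e]
      rfl
    · intro y
      have e : (⟨(1 - ((1:I) : ℝ)) * cubePhi y, memI' 1 y⟩ : I) = 0 := by
        ext; simp
      show H (⟨(1 - ((1:I) : ℝ)) * cubePhi y, memI' 1 y⟩, x) = _
      rw [e, H0]
      rfl
    · intro u y hy
      simp only [ContinuousMap.coe_mk, hB']
      have h0 : cubePhi y = 0 := cubePhi_boundary hy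
      have e1 : (⟨(1 - (u : ℝ)) * cubePhi y, memI' u y⟩ : I) = 0 := by
        ext; simp [h0]
      have e2 : (⟨cubePhi y, cubePhi_nonneg y, cubePhi_le_one y⟩ : I) = 0 := by
        ext; simp [h0]
      rw [e1, e2, H0]
  exact (F1.trans F2).trans (hBB' ▸ F3)

lemma subsingleton_homotopyGroup {Z : Type} [TopologicalSpace Z] (hZ : Ctr Z) (n : ℕ) (x : Z) :
    Subsingleton (HomotopyGroup (Fin n) Z x) := by
  constructor
  intro a b
  induction a using Quotient.inductionOn with | _ a =>
  induction b using Quotient.inductionOn with | _ b =>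
  apply Quotient.sound
  exact (genloop_null hZ x a.1 a.2).trans (genloop_null hZ x b.1 b.2).symm

end LemmaA

lemma isConnSpace_of_ctr {Z : Type} [TopologicalSpace Z] (hZ : Ctr Z) (n : ℤ) :
    IsConnSpace n Z :=
  ⟨fun _ => ⟨hZ.choose⟩, fun x i _ => subsingleton_homotopyGroup hZ i x⟩

section HFiberHelpers

variable {X Y : Type} [TopologicalSpace X] [TopologicalSpace Y] (f : C(X, Y)) (y : Y)

/-- first component of a homotopy fiber point -/
def hfst : C(HFiber f y, X) :=
  ⟨fun w => w.1.1, continuous_fst.comp continuous_subtype_val⟩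

/-- clamped evaluation of the path component -/
def hsnd : C(HFiber f y × ℝ, Y) :=
  ⟨fun w => w.1.1.2 (clamp w.2),
    ContinuousEval.continuous_eval.comp
      ((continuous_snd.comp (continuous_subtype_val.comp continuous_fst)).prodMk
        (continuous_clamp.comp continuous_snd))⟩

lemma hsnd_le_zero (w : HFiber f y) {r : ℝ} (h : r ≤ 0) : hsnd f y (w, r) = f (hfst f y w) := by
  show w.1.2 (clamp r) = _
  rw [clamp_of_nonpos h]
  exact w.2.1

lemma hsnd_ge_one (w : HFiber f y) {r : ℝ} (h : 1 ≤ r) : hsnd f y (w, r) = y := by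
  show w.1.2 (clamp r) = _
  rw [clamp_of_one_le h]
  exact w.2.2

lemma hsnd_coe (w : HFiber f y) (t : I) : hsnd f y (w, (t : ℝ)) = w.1.2 t := by
  show w.1.2 (clamp (t : ℝ)) = _
  simp

/-- restriction of a real-parametrized continuous map to the unit interval -/
def restI {W Z : Type} [TopologicalSpace W] [TopologicalSpace Z] (Γ : C(W × ℝ, Z)) :
    C(W × I, Z) :=
  ⟨fun w => Γ (w.1, (w.2 : ℝ)),
    Γ.continuous.comp (continuous_fst.prodMk (continuous_subtype_val.comp continuous_snd))⟩

/-- build a continuous map into a homotopy fiber -/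
def toHFiber {W : Type} [TopologicalSpace W] (a : C(W, X)) (Γ : C(W × ℝ, Y))
    (h0 : ∀ w, Γ (w, 0) = f (a w)) (h1 : ∀ w, Γ (w, 1) = y) : C(W, HFiber f y) :=
  ⟨fun w => ⟨(a w, (restI Γ).curry w), by simpa [restI] using h0 w, by simpa [restI] using h1 w⟩,
    ((a.continuous.prodMk ((restI Γ).curry.continuous)).subtype_mk _)⟩

@[simp] lemma toHFiber_fst {W : Type} [TopologicalSpace W] (a : C(W, X)) (Γ : C(W × ℝ, Y))
    (h0 h1) (w : W) : (toHFiber f y a Γ h0 h1 w).1.1 = a w := rfl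

@[simp] lemma toHFiber_snd {W : Type} [TopologicalSpace W] (a : C(W, X)) (Γ : C(W × ℝ, Y))
    (h0 h1) (w : W) (t : I) : (toHFiber f y a Γ h0 h1 w).1.2 t = Γ (w, (t : ℝ)) := rfl

@[simp] lemma hsnd_toHFiber {W : Type} [TopologicalSpace W] (a : C(W, X)) (Γ : C(W × ℝ, Y))
    (h0 h1) (w : W) (r : ℝ) :
    hsnd f y (toHFiber f y a Γ h0 h1 w, r) = Γ (w, (clamp r : ℝ)) := rfl

/-- equality in a homotopy fiber via components, with the path compared through `hsnd` -/
lemma hfiber_ext {w w' : HFiber f y} (h1 : w.1.1 = w'.1.1)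
    (h2 : ∀ t : I, w.1.2 t = w'.1.2 t) : w = w' := by
  apply Subtype.ext
  exact Prod.ext h1 (ContinuousMap.ext h2)

lemma hsnd_clamp (w : HFiber f y) (r : ℝ) :
    hsnd f y (w, ((clamp r : I) : ℝ)) = hsnd f y (w, r) := by
  show w.1.2 (clamp ((clamp r : I) : ℝ)) = w.1.2 (clamp r)
  simp [clamp_coe]

lemma hsnd_congr (w : HFiber f y) {r r' : ℝ} (h : r = r') :
    hsnd f y (w, r) = hsnd f y (w, r') := by rw [h]

/-- build a homotopy between maps into a homotopy fiber -/
def mkHomotopy {W : Type} [TopologicalSpace W] (F G : C(W, HFiber f y))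
    (a : C(I × W, X)) (Γ : C((I × W) × ℝ, Y))
    (h0 : ∀ q, Γ (q, 0) = f (a q)) (h1 : ∀ q, Γ (q, 1) = y)
    (ha0 : ∀ w, a (0, w) = (F w).1.1) (hΓ0 : ∀ w (t : I), Γ ((0, w), (t : ℝ)) = (F w).1.2 t)
    (ha1 : ∀ w, a (1, w) = (G w).1.1) (hΓ1 : ∀ w (t : I), Γ ((1, w), (t : ℝ)) = (G w).1.2 t) :
    F.Homotopy G where
  toContinuousMap := toHFiber f y a Γ h0 h1
  map_zero_left w := hfiber_ext f y (ha0 w) (hΓ0 w)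
  map_one_left w := hfiber_ext f y (ha1 w) (hΓ1 w)


end HFiberHelpers

section C1

variable {A : Type} [TopologicalSpace A]

/-- a self-map homotopic to the identity has contractible homotopy fibers -/
lemma ctr_hfiber_of_homotopic_id (m : C(A, A)) (M : C(I × A, A))
    (hM0 : ∀ a, M (0, a) = a) (hM1 : ∀ a, M (1, a) = m a) (p : A) :
    Ctr (HFiber m p) := by
  -- real-time extension of M
  set MR : C(ℝ × A, A) :=
    ⟨fun q => M (clamp q.1, q.2),
      M.continuous.comp ((continuous_clamp.comp continuous_fst).prodMk continuous_snd)⟩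
    with hMR
  have hMRle : ∀ (r : ℝ) (a : A), r ≤ 0 → MR (r, a) = a := by
    intro r a h; simp only [hMR, ContinuousMap.coe_mk, clamp_of_nonpos h, hM0]
  have hMRge : ∀ (r : ℝ) (a : A), 1 ≤ r → MR (r, a) = m a := by
    intro r a h; simp only [hMR, ContinuousMap.coe_mk, clamp_of_one_le h, hM1]
  -- the concatenation of the M-track with the fiber path
  have gtcont : Continuous (fun q : HFiber m p × ℝ =>
      if q.2 ≤ 1/2 then MR (2*q.2, hfst m p q.1) else hsnd m p (q.1, 2*q.2 - 1)) := by
    apply Continuous.if_le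
    · exact MR.continuous.comp ((by fun_prop : Continuous fun q : HFiber m p × ℝ => (2*q.2 : ℝ)).prodMk
        ((hfst m p).continuous.comp continuous_fst))
    · exact (hsnd m p).continuous.comp (continuous_fst.prodMk (by fun_prop))
    · exact continuous_snd
    · exact continuous_const
    · intro q hq
      rw [hq]
      rw [hMRge _ _ (by norm_num), hsnd_le_zero m p _ (by norm_num)]
  set gt : C(HFiber m p × ℝ, A) :=
    ⟨fun q => if q.2 ≤ 1/2 then MR (2*q.2, hfst m p q.1) else hsnd m p (q.1, 2*q.2 - 1), gtcont⟩
    with hgt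
  have hgt0 : ∀ w (r : ℝ), r ≤ 0 → gt (w, r) = hfst m p w := by
    intro w r h
    simp only [hgt, ContinuousMap.coe_mk]
    rw [if_pos (by linarith), hMRle _ _ (by linarith)]
  have hgt1 : ∀ w (r : ℝ), 1 ≤ r → gt (w, r) = p := by
    intro w r h
    simp only [hgt, ContinuousMap.coe_mk]
    rw [if_neg (by linarith), hsnd_ge_one m p _ (by linarith)]
  -- endpoint maps of the three stages
  set Γ1 : C(HFiber m p × ℝ, A) :=
    ⟨fun q => hsnd m p (q.1, 4*q.2 - 3),
      (hsnd m p).continuous.comp (continuous_fst.prodMk (by fun_prop))⟩ with hΓ1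
  set G1 : C(HFiber m p, HFiber m p) :=
    toHFiber m p (hfst m p) Γ1
      (fun w => hsnd_le_zero m p w (by norm_num))
      (fun w => hsnd_ge_one m p w (by norm_num)) with hG1
  have Γ2cont : Continuous (fun q : HFiber m p × ℝ =>
      if q.2 ≤ 1/2 then MR (1 - 2*q.2, hfst m p q.1) else gt (q.1, 2*q.2 - 1)) := by
    apply Continuous.if_le
    · exact MR.continuous.comp ((by fun_prop : Continuous fun q : HFiber m p × ℝ =>
        (1 - 2*q.2 : ℝ)).prodMk ((hfst m p).continuous.comp continuous_fst))
    · exact gt.continuous.comp (continuous_fst.prodMk (by fun_prop))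
    · exact continuous_snd
    · exact continuous_const
    · intro q hq
      rw [hq, hMRle _ _ (by norm_num), hgt0 _ _ (by norm_num)]
  set Γ2 : C(HFiber m p × ℝ, A) :=
    ⟨fun q => if q.2 ≤ 1/2 then MR (1 - 2*q.2, hfst m p q.1) else gt (q.1, 2*q.2 - 1),
      Γ2cont⟩ with hΓ2
  set G2 : C(HFiber m p, HFiber m p) :=
    toHFiber m p (hfst m p) Γ2
      (fun w => by
        simp only [hΓ2, ContinuousMap.coe_mk]
        rw [if_pos (by norm_num), hMRge _ _ (by norm_num)])
      (fun w => by
        simp only [hΓ2, ContinuousMap.coe_mk]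
        rw [if_neg (by norm_num), hgt1 _ _ (by norm_num)]) with hG2
  have Γ3cont : Continuous (fun q : HFiber m p × ℝ =>
      if q.2 ≤ 1/2 then MR (1 - 2*q.2, p) else p) := by
    apply Continuous.if_le
    · exact MR.continuous.comp ((by fun_prop : Continuous fun q : HFiber m p × ℝ =>
        (1 - 2*q.2 : ℝ)).prodMk continuous_const)
    · exact continuous_const
    · exact continuous_snd
    · exact continuous_const
    · intro q hq
      rw [hq, hMRle _ _ (by norm_num)]
  set Γ3 : C(HFiber m p × ℝ, A) :=
    ⟨fun q => if q.2 ≤ 1/2 then MR (1 - 2*q.2, p) else p, Γ3cont⟩ with hΓ3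
  set G3 : C(HFiber m p, HFiber m p) :=
    toHFiber m p (ContinuousMap.const _ p) Γ3
      (fun w => by
        simp only [hΓ3, ContinuousMap.coe_mk]
        rw [if_pos (by norm_num), hMRge _ _ (by norm_num)]
        rfl)
      (fun w => by
        simp only [hΓ3, ContinuousMap.coe_mk]
        rw [if_neg (by norm_num)]) with hG3
  -- stage R : id ≃ G1
  have SR : (ContinuousMap.id (HFiber m p)).Homotopy G1 := by
    refine mkHomotopy m p _ _
      ⟨fun q => hfst m p q.2, (hfst m p).continuous.comp continuous_snd⟩
      ⟨fun q => hsnd m p (q.1.2, q.2 + 3*(q.1.1 : ℝ)*(q.2 - 1)), ?_⟩ ?_ ?_ ?_ ?_ ?_ ?_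
    · exact (hsnd m p).continuous.comp ((continuous_snd.comp continuous_fst).prodMk (by fun_prop))
    · intro q
      simp only [ContinuousMap.coe_mk]
      rw [hsnd_le_zero m p _ (by nlinarith [q.1.2.1])]
    · intro q
      simp only [ContinuousMap.coe_mk]
      rw [hsnd_congr m p _ (show (1:ℝ) + 3*(q.1:ℝ)*((1:ℝ)-1) = 1 by ring),
        hsnd_ge_one m p _ le_rfl]
    · intro w; rfl
    · intro w t
      simp only [ContinuousMap.coe_mk, ContinuousMap.id_apply]
      rw [hsnd_congr m p _ (show (t:ℝ) + 3*((0:I):ℝ)*((t:ℝ)-1) = (t:ℝ) by norm_num),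
        hsnd_coe]
    · intro w; rfl
    · intro w t
      simp only [ContinuousMap.coe_mk]
      rw [hsnd_congr m p _ (show (t:ℝ) + 3*((1:I):ℝ)*((t:ℝ)-1) = 4*(t:ℝ)-3 by push_cast; ring)]
      rfl
  -- stage P : G1 ≃ G2
  have SP : G1.Homotopy G2 := by
    have c1 : Continuous (fun q : (I × HFiber m p) × ℝ =>
        if q.2 ≤ 1/2 then MR (1 - 2*q.2*(q.1.1 : ℝ), hfst m p q.1.2)
        else if q.2 ≤ 3/4 then MR (1 - (q.1.1 : ℝ)*(3 - 4*q.2), hfst m p q.1.2)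
        else hsnd m p (q.1.2, 4*q.2 - 3)) := by
      apply Continuous.if_le
      · exact MR.continuous.comp ((by fun_prop : Continuous fun q : (I × HFiber m p) × ℝ =>
          (1 - 2*q.2*(q.1.1 : ℝ) : ℝ)).prodMk ((hfst m p).continuous.comp
            (continuous_snd.comp continuous_fst)))
      · apply Continuous.if_le
        · exact MR.continuous.comp ((by fun_prop : Continuous fun q : (I × HFiber m p) × ℝ =>
            (1 - (q.1.1 : ℝ)*(3 - 4*q.2) : ℝ)).prodMk ((hfst m p).continuous.comp
              (continuous_snd.comp continuous_fst)))
        · exact (hsnd m p).continuous.comp ((continuous_snd.comp continuous_fst).prodMk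
            (by fun_prop))
        · exact continuous_snd
        · exact continuous_const
        · intro q hq
          rw [hq]
          rw [show (1 - (q.1.1 : ℝ)*(3 - 4*(3/4 : ℝ))) = 1 by ring, hMRge _ _ le_rfl,
            hsnd_le_zero m p _ (by norm_num)]
      · exact continuous_snd
      · exact continuous_const
      · intro q hq
        rw [hq, if_pos (by norm_num)]
        congr 1
        ring
    refine mkHomotopy m p _ _
      ⟨fun q => hfst m p q.2, (hfst m p).continuous.comp continuous_snd⟩
      ⟨_, c1⟩ ?_ ?_ ?_ ?_ ?_ ?_
    · intro q
      simp only [ContinuousMap.coe_mk]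
      rw [if_pos (by norm_num : (0:ℝ) ≤ 1/2)]
      rw [show (1 - 2*(0:ℝ)*(q.1 : ℝ)) = 1 by ring, hMRge _ _ le_rfl]
    · intro q
      simp only [ContinuousMap.coe_mk]
      rw [if_neg (by norm_num : ¬ ((1:ℝ) ≤ 1/2)), if_neg (by norm_num : ¬ ((1:ℝ) ≤ 3/4)),
        hsnd_ge_one m p _ (by norm_num)]
    · intro w; rfl
    · intro w t
      simp only [ContinuousMap.coe_mk]
      rw [show ((G1 w).1.2 t) = hsnd m p (w, 4*(t:ℝ)-3) from rfl]
      have h0 : ((0:I) : ℝ) = 0 := rfl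
      split_ifs with h1 h2
      · rw [show (1 - 2*(t:ℝ)*((0:I) : ℝ)) = 1 by rw [h0]; ring, hMRge _ _ le_rfl,
          hsnd_le_zero m p _ (by linarith)]
      · rw [show (1 - ((0:I) : ℝ)*(3 - 4*(t:ℝ))) = 1 by rw [h0]; ring, hMRge _ _ le_rfl,
          hsnd_le_zero m p _ (by linarith)]
      · rfl
    · intro w; rfl
    · intro w t
      simp only [ContinuousMap.coe_mk]
      rw [show ((G2 w).1.2 t) = (if (t:ℝ) ≤ 1/2 then MR (1 - 2*(t:ℝ), hfst m p w)
        else gt (w, 2*(t:ℝ) - 1)) from rfl]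
      have h1c : ((1:I) : ℝ) = 1 := rfl
      split_ifs with h1 h2
      · rw [show (1 - 2*(t:ℝ)*((1:I) : ℝ)) = 1 - 2*(t:ℝ) by rw [h1c]; ring]
      · rw [show (gt (w, 2*(t:ℝ) - 1)) = MR (2*(2*(t:ℝ)-1), hfst m p w) from
          by rw [hgt]; simp only [ContinuousMap.coe_mk]; rw [if_pos (by linarith)]]
        rw [show (1 - ((1:I) : ℝ)*(3 - 4*(t:ℝ))) = 2*(2*(t:ℝ)-1) by rw [h1c]; ring]
      · rw [show (gt (w, 2*(t:ℝ) - 1)) = hsnd m p (w, 2*(2*(t:ℝ)-1) - 1) from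
          by rw [hgt]; simp only [ContinuousMap.coe_mk]; rw [if_neg (by linarith)]]
        rw [hsnd_congr m p _ (show (4*(t:ℝ)-3 : ℝ) = 2*(2*(t:ℝ)-1) - 1 by ring)]
  -- stage S : G2 ≃ G3
  have SS : G2.Homotopy G3 := by
    have c2 : Continuous (fun q : (I × HFiber m p) × ℝ =>
        if q.2 ≤ 1/2 then MR (1 - 2*q.2, gt (q.1.2, (q.1.1 : ℝ)))
        else gt (q.1.2, (q.1.1 : ℝ) + (2*q.2 - 1)*(1 - (q.1.1 : ℝ)))) := by
      apply Continuous.if_le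
      · exact MR.continuous.comp ((by fun_prop : Continuous fun q : (I × HFiber m p) × ℝ =>
          (1 - 2*q.2 : ℝ)).prodMk (gt.continuous.comp ((continuous_snd.comp continuous_fst).prodMk
            (by fun_prop))))
      · exact gt.continuous.comp ((continuous_snd.comp continuous_fst).prodMk (by fun_prop))
      · exact continuous_snd
      · exact continuous_const
      · intro q hq
        rw [hq, hMRle _ _ (by norm_num)]
        congr 1
        ring
    refine mkHomotopy m p _ _
      ⟨fun q => gt (q.2, (q.1 : ℝ)), gt.continuous.comp (continuous_snd.prodMk (by fun_prop))⟩
      ⟨_, c2⟩ ?_ ?_ ?_ ?_ ?_ ?_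
    · intro q
      simp only [ContinuousMap.coe_mk]
      rw [if_pos (by norm_num : (0:ℝ) ≤ 1/2), show (1 - 2*(0:ℝ)) = 1 by ring, hMRge _ _ le_rfl]
    · intro q
      simp only [ContinuousMap.coe_mk]
      rw [if_neg (by norm_num : ¬ ((1:ℝ) ≤ 1/2)),
        hgt1 _ _ (by nlinarith [q.1.2.1, q.1.2.2])]
    · intro w
      simp only [ContinuousMap.coe_mk]
      rw [hgt0 _ _ (by norm_num)]
      rfl
    · intro w t
      simp only [ContinuousMap.coe_mk]
      rw [show ((G2 w).1.2 t) = (if (t:ℝ) ≤ 1/2 then MR (1 - 2*(t:ℝ), hfst m p w)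
        else gt (w, 2*(t:ℝ) - 1)) from rfl]
      have h0 : ((0:I) : ℝ) = 0 := rfl
      split_ifs with h1
      · rw [hgt0 _ _ (by norm_num)]
      · rw [show ((0:I) : ℝ) + (2*(t:ℝ) - 1)*(1 - ((0:I) : ℝ)) = 2*(t:ℝ) - 1 by
          rw [h0]; ring]
    · intro w
      simp only [ContinuousMap.coe_mk]
      rw [hgt1 _ _ (by norm_num)]
      rfl
    · intro w t
      simp only [ContinuousMap.coe_mk]
      rw [show ((G3 w).1.2 t) = (if (t:ℝ) ≤ 1/2 then MR (1 - 2*(t:ℝ), p) else p) from rfl]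
      have h1c : ((1:I) : ℝ) = 1 := rfl
      split_ifs with h1
      · rw [hgt1 _ _ (by norm_num)]
      · rw [show ((1:I) : ℝ) + (2*(t:ℝ) - 1)*(1 - ((1:I) : ℝ)) = 1 by rw [h1c]; ring,
          hgt1 _ _ le_rfl]
  -- assemble the contraction
  have zmem : Continuous (fun s : I => if (s:ℝ) ≤ 1/2 then MR (1 - 2*(s:ℝ), p) else p) := by
    apply Continuous.if_le
    · exact MR.continuous.comp ((by fun_prop : Continuous fun s : I =>
        (1 - 2*(s:ℝ) : ℝ)).prodMk continuous_const)
    · exact continuous_const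
    · exact continuous_subtype_val
    · exact continuous_const
    · intro s hs
      rw [hs, hMRle _ _ (by norm_num)]
  refine ⟨⟨(p, ⟨_, zmem⟩), ?_, ?_⟩, ((SR.trans SP).trans SS).toContinuousMap, ?_, ?_⟩
  · show (if ((0:I):ℝ) ≤ 1/2 then MR (1 - 2*((0:I):ℝ), p) else p) = m p
    rw [if_pos (by norm_num), show (1 - 2*((0:I):ℝ)) = 1 by norm_num, hMRge _ _ le_rfl]
  · show (if ((1:I):ℝ) ≤ 1/2 then MR (1 - 2*((1:I):ℝ), p) else p) = p
    rw [if_neg (by norm_num)]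
  · intro w
    simp only [ContinuousMap.Homotopy.coe_toContinuousMap]
    rw [((SR.trans SP).trans SS).apply_zero]
    rfl
  · intro w
    simp only [ContinuousMap.Homotopy.coe_toContinuousMap]
    rw [((SR.trans SP).trans SS).apply_one]
    refine hfiber_ext m p rfl ?_
    intro t
    rfl

end C1

section LemC

variable {A B : Type} [TopologicalSpace A] [TopologicalSpace B]

lemma ctr_hfiber_of_hequiv (Φ : C(A, B)) (Ψ : C(B, A))
    (K : C(I × A, A)) (hK0 : ∀ a, K (0, a) = a) (hK1 : ∀ a, K (1, a) = Ψ (Φ a))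
    (L : C(I × B, B)) (hL0 : ∀ b, L (0, b) = Φ (Ψ b)) (hL1 : ∀ b, L (1, b) = b)
    (b : B) : Ctr (HFiber Φ b) := by
  -- real-time extension of L
  set LR : C(ℝ × B, B) :=
    ⟨fun q => L (clamp q.1, q.2),
      L.continuous.comp ((continuous_clamp.comp continuous_fst).prodMk continuous_snd)⟩
    with hLR
  have hLRle : ∀ (r : ℝ) (z : B), r ≤ 0 → LR (r, z) = Φ (Ψ z) := by
    intro r z h; simp only [hLR, ContinuousMap.coe_mk, clamp_of_nonpos h, hL0]
  have hLRge : ∀ (r : ℝ) (z : B), 1 ≤ r → LR (r, z) = z := by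
    intro r z h; simp only [hLR, ContinuousMap.coe_mk, clamp_of_one_le h, hL1]
  -- the comparison maps d and c
  set d : C(HFiber Φ b, HFiber (Ψ.comp Φ) (Ψ b)) :=
    toHFiber (Ψ.comp Φ) (Ψ b) (hfst Φ b)
      ⟨fun q => Ψ (hsnd Φ b q), Ψ.continuous.comp (hsnd Φ b).continuous⟩
      (fun w => by
        simp only [ContinuousMap.coe_mk]
        rw [hsnd_le_zero Φ b _ le_rfl]; rfl)
      (fun w => by
        simp only [ContinuousMap.coe_mk]
        rw [hsnd_ge_one Φ b _ le_rfl]) with hd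
  have hdfst : ∀ w, hfst _ _ (d w) = hfst Φ b w := fun w => rfl
  have hdsnd : ∀ w (r : ℝ), hsnd _ _ (d w, r) = Ψ (hsnd Φ b (w, r)) := by
    intro w r
    rw [hd, hsnd_toHFiber]
    simp only [ContinuousMap.coe_mk]
    rw [hsnd_clamp]
  have ccont : Continuous (fun q : HFiber (Ψ.comp Φ) (Ψ b) × ℝ =>
      if q.2 ≤ 1/4 then LR (1 - 4*q.2, Φ (hfst _ _ q.1))
      else if q.2 ≤ 3/4 then Φ (hsnd _ _ (q.1, 2*q.2 - 1/2))
      else LR (4*q.2 - 3, b)) := by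
    apply Continuous.if_le
    · exact LR.continuous.comp ((by fun_prop : Continuous fun q : HFiber (Ψ.comp Φ) (Ψ b) × ℝ =>
        (1 - 4*q.2 : ℝ)).prodMk (Φ.continuous.comp ((hfst _ _).continuous.comp continuous_fst)))
    · apply Continuous.if_le
      · exact Φ.continuous.comp ((hsnd _ _).continuous.comp (continuous_fst.prodMk (by fun_prop)))
      · exact LR.continuous.comp ((by fun_prop : Continuous fun q : HFiber (Ψ.comp Φ) (Ψ b) × ℝ =>
          (4*q.2 - 3 : ℝ)).prodMk continuous_const)
      · exact continuous_snd
      · exact continuous_const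
      · intro q hq
        rw [hq]
        rw [hsnd_ge_one _ _ _ (by norm_num), hLRle _ _ (by norm_num)]
    · exact continuous_snd
    · exact continuous_const
    · intro q hq
      rw [hq, if_pos (by norm_num), hLRle _ _ (by norm_num),
        hsnd_le_zero _ _ _ (by norm_num)]
      rfl
  set c : C(HFiber (Ψ.comp Φ) (Ψ b), HFiber Φ b) :=
    toHFiber Φ b (hfst _ _) ⟨_, ccont⟩
      (fun w => by
        simp only [ContinuousMap.coe_mk]
        rw [if_pos (by norm_num), show (1 - 4*(0:ℝ)) = 1 by ring, hLRge _ _ le_rfl])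
      (fun w => by
        simp only [ContinuousMap.coe_mk]
        rw [if_neg (by norm_num), if_neg (by norm_num),
          show (4*(1:ℝ) - 3) = 1 by ring, hLRge _ _ le_rfl]) with hc
  -- padded identity map
  set Pad : C(HFiber Φ b, HFiber Φ b) :=
    toHFiber Φ b (hfst Φ b)
      ⟨fun q => hsnd Φ b (q.1, 2*q.2 - 1/2),
        (hsnd Φ b).continuous.comp (continuous_fst.prodMk (by fun_prop))⟩
      (fun w => hsnd_le_zero Φ b _ (by norm_num))
      (fun w => hsnd_ge_one Φ b _ (by norm_num)) with hPad
  -- homotopy from the identity to Pad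
  have RQ : (ContinuousMap.id (HFiber Φ b)).Homotopy Pad := by
    refine mkHomotopy Φ b _ _
      ⟨fun q => hfst Φ b q.2, (hfst Φ b).continuous.comp continuous_snd⟩
      ⟨fun q => hsnd Φ b (q.1.2, q.2 + (q.1.1 : ℝ)*(q.2 - 1/2)), ?_⟩ ?_ ?_ ?_ ?_ ?_ ?_
    · exact (hsnd Φ b).continuous.comp ((continuous_snd.comp continuous_fst).prodMk (by fun_prop))
    · intro q
      simp only [ContinuousMap.coe_mk]
      rw [hsnd_le_zero Φ b _ (by nlinarith [q.1.2.1])]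
    · intro q
      simp only [ContinuousMap.coe_mk]
      rw [hsnd_ge_one Φ b _ (by nlinarith [q.1.2.1])]
    · intro w; rfl
    · intro w t
      simp only [ContinuousMap.coe_mk, ContinuousMap.id_apply]
      rw [hsnd_congr Φ b _ (show (t:ℝ) + ((0:I) : ℝ)*((t:ℝ) - 1/2) = (t:ℝ) by norm_num),
        hsnd_coe]
    · intro w; rfl
    · intro w t
      simp only [ContinuousMap.coe_mk]
      rw [hsnd_congr Φ b _ (show (t:ℝ) + ((1:I) : ℝ)*((t:ℝ) - 1/2) = 2*(t:ℝ) - 1/2 by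
        push_cast; ring)]
      rfl
  -- homotopy from Pad to c ∘ d
  have Q : Pad.Homotopy (c.comp d) := by
    have qcont : Continuous (fun q : (I × HFiber Φ b) × ℝ =>
        if q.2 ≤ 1/4 then LR (1 - 4*q.2*(q.1.1 : ℝ), Φ (hfst Φ b q.1.2))
        else if q.2 ≤ 3/4 then LR (1 - (q.1.1 : ℝ), hsnd Φ b (q.1.2, 2*q.2 - 1/2))
        else LR ((1 - (q.1.1 : ℝ)) + (4*q.2 - 3)*(q.1.1 : ℝ), b)) := by
      apply Continuous.if_le
      · exact LR.continuous.comp ((by fun_prop : Continuous fun q : (I × HFiber Φ b) × ℝ =>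
          (1 - 4*q.2*(q.1.1 : ℝ) : ℝ)).prodMk (Φ.continuous.comp
            ((hfst Φ b).continuous.comp (continuous_snd.comp continuous_fst))))
      · apply Continuous.if_le
        · exact LR.continuous.comp ((by fun_prop : Continuous fun q : (I × HFiber Φ b) × ℝ =>
            (1 - (q.1.1 : ℝ) : ℝ)).prodMk ((hsnd Φ b).continuous.comp
              ((continuous_snd.comp continuous_fst).prodMk (by fun_prop))))
        · exact LR.continuous.comp ((by fun_prop : Continuous fun q : (I × HFiber Φ b) × ℝ =>
            ((1 - (q.1.1 : ℝ)) + (4*q.2 - 3)*(q.1.1 : ℝ) : ℝ)).prodMk continuous_const)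
        · exact continuous_snd
        · exact continuous_const
        · intro q hq
          rw [hq]
          rw [hsnd_ge_one Φ b _ (by norm_num)]
          congr 1
          ring
      · exact continuous_snd
      · exact continuous_const
      · intro q hq
        rw [hq, if_pos (by norm_num)]
        rw [hsnd_le_zero Φ b _ (by norm_num)]
        congr 1
        ring
    refine mkHomotopy Φ b _ _
      ⟨fun q => hfst Φ b q.2, (hfst Φ b).continuous.comp continuous_snd⟩
      ⟨_, qcont⟩ ?_ ?_ ?_ ?_ ?_ ?_
    · intro q
      simp only [ContinuousMap.coe_mk]
      rw [if_pos (by norm_num), show (1 - 4*(0:ℝ)*(q.1 : ℝ)) = 1 by ring, hLRge _ _ le_rfl]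
    · intro q
      simp only [ContinuousMap.coe_mk]
      rw [if_neg (by norm_num), if_neg (by norm_num),
        show ((1 - (q.1 : ℝ)) + (4*(1:ℝ) - 3)*(q.1 : ℝ)) = 1 by ring, hLRge _ _ le_rfl]
    · intro w; rfl
    · intro w t
      simp only [ContinuousMap.coe_mk]
      rw [show (Pad w).1.2 t = hsnd Φ b (w, 2*(t:ℝ) - 1/2) from rfl]
      have h0 : ((0:I) : ℝ) = 0 := rfl
      split_ifs with h1 h2
      · rw [show (1 - 4*(t:ℝ)*((0:I) : ℝ)) = 1 by rw [h0]; ring, hLRge _ _ le_rfl,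
          hsnd_le_zero Φ b _ (by linarith)]
      · rw [show (1 - ((0:I) : ℝ)) = 1 by rw [h0]; ring, hLRge _ _ le_rfl]
      · rw [show ((1 - ((0:I) : ℝ)) + (4*(t:ℝ) - 3)*((0:I) : ℝ)) = 1 by rw [h0]; ring,
          hLRge _ _ le_rfl, hsnd_ge_one Φ b _ (by linarith)]
    · intro w; rfl
    · intro w t
      simp only [ContinuousMap.coe_mk]
      rw [show ((c.comp d) w).1.2 t =
        (if (t:ℝ) ≤ 1/4 then LR (1 - 4*(t:ℝ), Φ (hfst _ _ (d w)))
          else if (t:ℝ) ≤ 3/4 then Φ (hsnd _ _ (d w, 2*(t:ℝ) - 1/2))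
          else LR (4*(t:ℝ) - 3, b)) from rfl]
      have h1c : ((1:I) : ℝ) = 1 := rfl
      split_ifs with h1 h2
      · rw [show (1 - 4*(t:ℝ)*((1:I) : ℝ)) = 1 - 4*(t:ℝ) by rw [h1c]; ring, hdfst]
      · rw [hdsnd, show (1 - ((1:I) : ℝ)) = 0 by rw [h1c]; ring, hLRle _ _ le_rfl]
      · rw [show ((1 - ((1:I) : ℝ)) + (4*(t:ℝ) - 3)*((1:I) : ℝ)) = 4*(t:ℝ) - 3 by
          rw [h1c]; ring]
  -- contract through the contractible fiber of Ψ ∘ Φ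
  obtain ⟨z', Hc, hHc0, hHc1⟩ := ctr_hfiber_of_homotopic_id (Ψ.comp Φ) K hK0
    (fun a => by rw [hK1]; rfl) (Ψ b)
  have G2 : (c.comp d).Homotopy (ContinuousMap.const _ (c z')) := by
    refine ⟨⟨fun q => c (Hc (q.1, d q.2)), ?_⟩, ?_, ?_⟩
    · exact c.continuous.comp (Hc.continuous.comp (continuous_fst.prodMk
        (d.continuous.comp continuous_snd)))
    · intro w
      simp only [ContinuousMap.coe_mk]
      rw [hHc0]
      rfl
    · intro w
      simp only [ContinuousMap.coe_mk]
      rw [hHc1]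
      rfl
  refine ⟨c z', ((RQ.trans Q).trans G2).toContinuousMap, ?_, ?_⟩
  · intro w
    simp only [ContinuousMap.Homotopy.coe_toContinuousMap]
    rw [((RQ.trans Q).trans G2).apply_zero]
    rfl
  · intro w
    simp only [ContinuousMap.Homotopy.coe_toContinuousMap]
    rw [((RQ.trans Q).trans G2).apply_one]
    rfl

end LemC

section LoopHelpers

variable {W Z : Type} [TopologicalSpace W] [TopologicalSpace Z] {z : Z}

/-- build a continuous map into a loop space -/
def toLoopSp (F1 : C(W × I, Z)) (h0 : ∀ w, F1 (w, 0) = z) (h1 : ∀ w, F1 (w, 1) = z) :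
    C(W, LoopSp Z z) :=
  ⟨fun w => ⟨F1.curry w, by simpa using h0 w, by simpa using h1 w⟩,
    (F1.curry.continuous).subtype_mk _⟩

@[simp] lemma toLoopSp_apply (F1 : C(W × I, Z)) (h0 : ∀ w, F1 (w, 0) = z)
    (h1 : ∀ w, F1 (w, 1) = z) (w : W) (t : I) :
    (toLoopSp F1 h0 h1 w).1 t = F1 (w, t) := rfl

/-- build a homotopy between maps into a loop space -/
def mkLoopHomotopy (F G : C(W, LoopSp Z z)) (D : C((I × W) × I, Z))
    (h0 : ∀ q, D (q, 0) = z) (h1 : ∀ q, D (q, 1) = z)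
    (hF : ∀ w (t : I), D ((0, w), t) = (F w).1 t)
    (hG : ∀ w (t : I), D ((1, w), t) = (G w).1 t) : F.Homotopy G where
  toContinuousMap := toLoopSp D h0 h1
  map_zero_left w := Subtype.ext (ContinuousMap.ext (hF w))
  map_one_left w := Subtype.ext (ContinuousMap.ext (hG w))

end LoopHelpers

section OmegaAccess

variable {X Y : Type} [TopologicalSpace X] [TopologicalSpace Y]

/-- the `Y`-component of a loop in the homotopy fiber of `g`, clamped -/
def loopY (g : C(Y, X)) (x₀ : X) (pt : HFiber g x₀) :
    C(LoopSp (HFiber g x₀) pt × ℝ, Y) :=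
  ⟨fun q => hfst g x₀ (q.1.1 (clamp q.2)),
    (hfst g x₀).continuous.comp (ContinuousEval.continuous_eval.comp
      ((continuous_subtype_val.comp continuous_fst).prodMk
        (continuous_clamp.comp continuous_snd)))⟩

/-- the `X`-square component of a loop in the homotopy fiber of `g`, clamped -/
def loopS (g : C(Y, X)) (x₀ : X) (pt : HFiber g x₀) :
    C(LoopSp (HFiber g x₀) pt × (ℝ × ℝ), X) :=
  ⟨fun q => hsnd g x₀ (q.1.1 (clamp q.2.1), q.2.2),
    (hsnd g x₀).continuous.comp
      ((ContinuousEval.continuous_eval.comp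
        ((continuous_subtype_val.comp continuous_fst).prodMk
          (continuous_clamp.comp (continuous_fst.comp continuous_snd)))).prodMk
        (continuous_snd.comp continuous_snd))⟩

variable (g : C(Y, X)) (x₀ : X) (pt : HFiber g x₀)

lemma loopY_coe (δ : LoopSp (HFiber g x₀) pt) (t : I) :
    loopY g x₀ pt (δ, (t : ℝ)) = hfst g x₀ (δ.1 t) := by
  simp only [loopY, ContinuousMap.coe_mk, clamp_coe]

lemma loopS_coe (δ : LoopSp (HFiber g x₀) pt) (t s : I) :
    loopS g x₀ pt (δ, ((t : ℝ), (s : ℝ))) = (δ.1 t).1.2 s := by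
  simp only [loopS, ContinuousMap.coe_mk, clamp_coe, hsnd_coe]

lemma loopY_congr (δ : LoopSp (HFiber g x₀) pt) {r r' : ℝ} (h : r = r') :
    loopY g x₀ pt (δ, r) = loopY g x₀ pt (δ, r') := by rw [h]

lemma loopS_congr (δ : LoopSp (HFiber g x₀) pt) {r r' u u' : ℝ} (h : r = r') (h' : u = u') :
    loopS g x₀ pt (δ, (r, u)) = loopS g x₀ pt (δ, (r', u')) := by rw [h, h']

lemma loopS_s0 (δ : LoopSp (HFiber g x₀) pt) (r : ℝ) {u : ℝ} (hu : u ≤ 0) :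
    loopS g x₀ pt (δ, (r, u)) = g (loopY g x₀ pt (δ, r)) := by
  simp only [loopS, loopY, ContinuousMap.coe_mk]
  rw [hsnd_le_zero g x₀ _ hu]

lemma loopS_s1 (δ : LoopSp (HFiber g x₀) pt) (r : ℝ) {u : ℝ} (hu : 1 ≤ u) :
    loopS g x₀ pt (δ, (r, u)) = x₀ := by
  simp only [loopS, ContinuousMap.coe_mk]
  rw [hsnd_ge_one g x₀ _ hu]

section WithPt

variable {y₀ : Y}

lemma loopY_le (hpt1 : pt.1.1 = y₀) (δ : LoopSp (HFiber g x₀) pt) {r : ℝ} (h : r ≤ 0) :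
    loopY g x₀ pt (δ, r) = y₀ := by
  simp only [loopY, ContinuousMap.coe_mk, clamp_of_nonpos h, δ.2.1]
  exact hpt1

lemma loopY_ge (hpt1 : pt.1.1 = y₀) (δ : LoopSp (HFiber g x₀) pt) {r : ℝ} (h : 1 ≤ r) :
    loopY g x₀ pt (δ, r) = y₀ := by
  simp only [loopY, ContinuousMap.coe_mk, clamp_of_one_le h, δ.2.2]
  exact hpt1

lemma loopS_t0 (hpt2 : ∀ s : I, pt.1.2 s = x₀) (δ : LoopSp (HFiber g x₀) pt)
    {r : ℝ} (h : r ≤ 0) (u : ℝ) : loopS g x₀ pt (δ, (r, u)) = x₀ := by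
  simp only [loopS, ContinuousMap.coe_mk, clamp_of_nonpos h, δ.2.1, hsnd]
  exact hpt2 _

lemma loopS_t1 (hpt2 : ∀ s : I, pt.1.2 s = x₀) (δ : LoopSp (HFiber g x₀) pt)
    {r : ℝ} (h : 1 ≤ r) (u : ℝ) : loopS g x₀ pt (δ, (r, u)) = x₀ := by
  simp only [loopS, ContinuousMap.coe_mk, clamp_of_one_le h, δ.2.2, hsnd]
  exact hpt2 _

end WithPt

end OmegaAccess

section MainConstruction

variable {X Y : Type} [TopologicalSpace X] [TopologicalSpace Y]

/-- the `Y`-component of the comparison map `Φ` -/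
def PhiY (f : C(X, Y)) (g : C(Y, X)) (y₀ : Y) (hgf : ∀ x, g (f x) = x) :
    C(HFiber f y₀ × I, Y) :=
  ⟨fun v => if ((v.2 : I) : ℝ) ≤ 1/2 then hsnd f y₀ (v.1, 1 - 2*((v.2 : I) : ℝ))
    else f (g (hsnd f y₀ (v.1, 2*((v.2 : I) : ℝ) - 1))), by
    apply Continuous.if_le
    · exact (hsnd f y₀).continuous.comp (continuous_fst.prodMk (by fun_prop))
    · exact f.continuous.comp (g.continuous.comp
        ((hsnd f y₀).continuous.comp (continuous_fst.prodMk (by fun_prop))))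
    · exact continuous_subtype_val.comp continuous_snd
    · exact continuous_const
    · intro v hv
      rw [hv]
      rw [hsnd_congr f y₀ _ (show (1 - 2*(1/2 : ℝ)) = 0 by ring),
        hsnd_congr f y₀ _ (show (2*(1/2 : ℝ) - 1) = 0 by ring),
        hsnd_le_zero f y₀ _ le_rfl, hgf]⟩

/-- the square component of the comparison map `Φ` -/
def PhiS (f : C(X, Y)) (g : C(Y, X)) (y₀ : Y) : C((HFiber f y₀ × I) × ℝ, X) :=
  ⟨fun q => g (hsnd f y₀ (q.1.1,
      |1 - 2*((q.1.2 : I) : ℝ)| + q.2*(1 - |1 - 2*((q.1.2 : I) : ℝ)|))),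
    g.continuous.comp ((hsnd f y₀).continuous.comp
      ((continuous_fst.comp continuous_fst).prodMk (by fun_prop)))⟩

/-- the comparison map `Φ` as a family of fiber points -/
def PhiD (f : C(X, Y)) (g : C(Y, X)) (x₀ : X) (y₀ : Y)
    (hg : g y₀ = x₀) (hgf : ∀ x, g (f x) = x) :
    C(HFiber f y₀ × I, HFiber g x₀) :=
  toHFiber g x₀ (PhiY f g y₀ hgf) (PhiS f g y₀)
    (by
      intro v
      simp only [PhiS, PhiY, ContinuousMap.coe_mk]
      rcases le_or_gt ((v.2 : I) : ℝ) (1/2) with h | h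
      · rw [if_pos h]
        congr 1
        rw [hsnd_congr f y₀ _ (show |1 - 2*((v.2 : I) : ℝ)| + 0*(1 - |1 - 2*((v.2 : I) : ℝ)|)
          = 1 - 2*((v.2 : I) : ℝ) by rw [abs_of_nonneg (by linarith)]; ring)]
      · rw [if_neg (not_le.mpr h), hgf]
        congr 1
        rw [hsnd_congr f y₀ _ (show |1 - 2*((v.2 : I) : ℝ)| + 0*(1 - |1 - 2*((v.2 : I) : ℝ)|)
          = 2*((v.2 : I) : ℝ) - 1 by rw [abs_of_nonpos (by linarith)]; ring)])
    (by
      intro v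
      simp only [PhiS, ContinuousMap.coe_mk]
      rw [hsnd_congr f y₀ _ (show |1 - 2*((v.2 : I) : ℝ)| + 1*(1 - |1 - 2*((v.2 : I) : ℝ)|)
        = 1 by ring), hsnd_ge_one f y₀ _ le_rfl, hg])

/-- the comparison map `Φ` -/
def PhiMap (f : C(X, Y)) (g : C(Y, X)) (x₀ : X) (y₀ : Y) (pt : HFiber g x₀)
    (hf : f x₀ = y₀) (hg : g y₀ = x₀) (hgf : ∀ x, g (f x) = x)
    (hpt1 : pt.1.1 = y₀) (hpt2 : ∀ s : I, pt.1.2 s = x₀) :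
    C(HFiber f y₀, LoopSp (HFiber g x₀) pt) :=
  toLoopSp (PhiD f g x₀ y₀ hg hgf)
    (by
      intro w
      refine (hfiber_ext g x₀ ?_ ?_).symm
      · show pt.1.1 = PhiY f g y₀ hgf (w, 0)
        simp only [PhiY, ContinuousMap.coe_mk]
        rw [if_pos (by norm_num : ((0:I) : ℝ) ≤ 1/2),
          hsnd_congr f y₀ _ (show (1 - 2*((0:I) : ℝ)) = 1 by norm_num),
          hsnd_ge_one f y₀ _ le_rfl, hpt1]
      · intro s
        show pt.1.2 s = PhiS f g y₀ ((w, 0), (s : ℝ))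
        simp only [PhiS, ContinuousMap.coe_mk]
        rw [hsnd_congr f y₀ _ (show |1 - 2*((0:I) : ℝ)| + (s:ℝ)*(1 - |1 - 2*((0:I) : ℝ)|)
          = 1 by norm_num), hsnd_ge_one f y₀ _ le_rfl, hg, hpt2])
    (by
      intro w
      refine (hfiber_ext g x₀ ?_ ?_).symm
      · show pt.1.1 = PhiY f g y₀ hgf (w, 1)
        simp only [PhiY, ContinuousMap.coe_mk]
        rw [if_neg (by norm_num : ¬ (((1:I) : ℝ) ≤ 1/2)),
          hsnd_congr f y₀ _ (show (2*((1:I) : ℝ) - 1) = 1 by norm_num),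
          hsnd_ge_one f y₀ _ le_rfl, hg, hf, hpt1]
      · intro s
        show pt.1.2 s = PhiS f g y₀ ((w, 1), (s : ℝ))
        simp only [PhiS, ContinuousMap.coe_mk]
        rw [hsnd_congr f y₀ _ (show |1 - 2*((1:I) : ℝ)| + (s:ℝ)*(1 - |1 - 2*((1:I) : ℝ)|)
          = 1 by norm_num), hsnd_ge_one f y₀ _ le_rfl, hg, hpt2])

/-- the comparison map `Ψ` -/
def PsiMap (f : C(X, Y)) (g : C(Y, X)) (x₀ : X) (y₀ : Y) (pt : HFiber g x₀)
    (hf : f x₀ = y₀) (hpt1 : pt.1.1 = y₀) :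
    C(LoopSp (HFiber g x₀) pt, HFiber f y₀) :=
  toHFiber f y₀ (ContinuousMap.const _ x₀)
    ⟨fun q => loopY g x₀ pt (q.1, 1 - q.2),
      (loopY g x₀ pt).continuous.comp (continuous_fst.prodMk (by fun_prop))⟩
    (fun δ => by
      simp only [ContinuousMap.coe_mk]
      rw [loopY_ge g x₀ pt hpt1 δ (by norm_num)]
      exact hf.symm)
    (fun δ => by
      simp only [ContinuousMap.coe_mk]
      rw [loopY_le g x₀ pt hpt1 δ (by norm_num)])

end MainConstruction

section KHomotopy

variable {X Y : Type} [TopologicalSpace X] [TopologicalSpace Y]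

/-- homotopy from the identity to `Ψ ∘ Φ` -/
lemma K_homotopy (f : C(X, Y)) (g : C(Y, X)) (x₀ : X) (y₀ : Y) (pt : HFiber g x₀)
    (hf : f x₀ = y₀) (hg : g y₀ = x₀) (hgf : ∀ x, g (f x) = x)
    (hpt1 : pt.1.1 = y₀) (hpt2 : ∀ s : I, pt.1.2 s = x₀) :
    Nonempty ((ContinuousMap.id (HFiber f y₀)).Homotopy
      ((PsiMap f g x₀ y₀ pt hf hpt1).comp (PhiMap f g x₀ y₀ pt hf hg hgf hpt1 hpt2))) := by
  -- the padded identity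
  set PadK : C(HFiber f y₀, HFiber f y₀) :=
    toHFiber f y₀ (hfst f y₀)
      ⟨fun q => hsnd f y₀ (q.1, 2*q.2 - 1),
        (hsnd f y₀).continuous.comp (continuous_fst.prodMk (by fun_prop))⟩
      (fun w => hsnd_le_zero f y₀ _ (by norm_num))
      (fun w => hsnd_ge_one f y₀ _ (by norm_num)) with hPadK
  have KR : (ContinuousMap.id (HFiber f y₀)).Homotopy PadK := by
    refine mkHomotopy f y₀ _ _
      ⟨fun q => hfst f y₀ q.2, (hfst f y₀).continuous.comp continuous_snd⟩
      ⟨fun q => hsnd f y₀ (q.1.2, q.2 + (q.1.1 : ℝ)*(q.2 - 1)), ?_⟩ ?_ ?_ ?_ ?_ ?_ ?_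
    · exact (hsnd f y₀).continuous.comp ((continuous_snd.comp continuous_fst).prodMk (by fun_prop))
    · intro q
      simp only [ContinuousMap.coe_mk]
      rw [hsnd_le_zero f y₀ _ (by nlinarith [q.1.2.1])]
    · intro q
      simp only [ContinuousMap.coe_mk]
      rw [hsnd_congr f y₀ _ (show (1:ℝ) + (q.1:ℝ)*((1:ℝ) - 1) = 1 by ring),
        hsnd_ge_one f y₀ _ le_rfl]
    · intro w; rfl
    · intro w t
      simp only [ContinuousMap.coe_mk, ContinuousMap.id_apply]
      rw [hsnd_congr f y₀ _ (show (t:ℝ) + ((0:I) : ℝ)*((t:ℝ) - 1) = (t:ℝ) by norm_num),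
        hsnd_coe]
    · intro w; rfl
    · intro w t
      simp only [ContinuousMap.coe_mk]
      rw [hsnd_congr f y₀ _ (show (t:ℝ) + ((1:I) : ℝ)*((t:ℝ) - 1) = 2*(t:ℝ) - 1 by
        push_cast; ring)]
      rfl
  have Kmain : PadK.Homotopy
      ((PsiMap f g x₀ y₀ pt hf hpt1).comp (PhiMap f g x₀ y₀ pt hf hg hgf hpt1 hpt2)) := by
    have Γcont : Continuous (fun q : (I × HFiber f y₀) × ℝ =>
        if q.2 ≤ 1/2 then f (g (hsnd f y₀ (q.1.2, (q.1.1 : ℝ)*(1 - 2*q.2))))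
        else hsnd f y₀ (q.1.2, 2*q.2 - 1)) := by
      apply Continuous.if_le
      · exact f.continuous.comp (g.continuous.comp ((hsnd f y₀).continuous.comp
          ((continuous_snd.comp continuous_fst).prodMk (by fun_prop))))
      · exact (hsnd f y₀).continuous.comp ((continuous_snd.comp continuous_fst).prodMk
          (by fun_prop))
      · exact continuous_snd
      · exact continuous_const
      · intro q hq
        rw [hq]
        rw [hsnd_congr f y₀ _ (show ((q.1.1:ℝ)*(1 - 2*(1/2 : ℝ))) = 0 by ring),
          hsnd_congr f y₀ _ (show (2*(1/2:ℝ) - 1) = 0 by ring),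
          hsnd_le_zero f y₀ _ le_rfl, hgf]
    refine mkHomotopy f y₀ _ _
      ⟨fun q => g (hsnd f y₀ (q.2, (q.1 : ℝ))),
        g.continuous.comp ((hsnd f y₀).continuous.comp (continuous_snd.prodMk (by fun_prop)))⟩
      ⟨_, Γcont⟩ ?_ ?_ ?_ ?_ ?_ ?_
    · intro q
      simp only [ContinuousMap.coe_mk]
      rw [if_pos (by norm_num : (0:ℝ) ≤ 1/2),
        hsnd_congr f y₀ _ (show ((q.1:ℝ)*(1 - 2*(0:ℝ))) = (q.1:ℝ) by ring)]
    · intro q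
      simp only [ContinuousMap.coe_mk]
      rw [if_neg (by norm_num : ¬ ((1:ℝ) ≤ 1/2)),
        hsnd_congr f y₀ _ (show (2*(1:ℝ) - 1) = 1 by ring), hsnd_ge_one f y₀ _ le_rfl]
    · intro w
      simp only [ContinuousMap.coe_mk]
      rw [hsnd_le_zero f y₀ _ (by norm_num), hgf]
      rfl
    · intro w t
      simp only [ContinuousMap.coe_mk]
      rw [show (PadK w).1.2 t = hsnd f y₀ (w, 2*(t:ℝ) - 1) from rfl]
      split_ifs with h1
      · rw [hsnd_congr f y₀ _ (show (((0:I):ℝ)*(1 - 2*(t:ℝ))) = 0 by norm_num),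
          hsnd_le_zero f y₀ _ le_rfl, hsnd_le_zero f y₀ _ (by linarith), hgf]
      · rfl
    · intro w
      simp only [ContinuousMap.coe_mk]
      rw [hsnd_ge_one f y₀ _ (by norm_num), hg]
      rfl
    · intro w t
      simp only [ContinuousMap.coe_mk]
      have hrhs : (((PsiMap f g x₀ y₀ pt hf hpt1).comp
          (PhiMap f g x₀ y₀ pt hf hg hgf hpt1 hpt2)) w).1.2 t
          = loopY g x₀ pt (PhiMap f g x₀ y₀ pt hf hg hgf hpt1 hpt2 w, 1 - (t:ℝ)) := rfl
      rw [hrhs]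
      have hmem : (0:ℝ) ≤ 1 - (t:ℝ) ∧ 1 - (t:ℝ) ≤ 1 := ⟨by linarith [t.2.2], by linarith [t.2.1]⟩
      have hclamp : ((clamp (1 - (t:ℝ)) : I) : ℝ) = 1 - (t:ℝ) := clamp_coe_mem hmem.1 hmem.2
      have hloopY : loopY g x₀ pt (PhiMap f g x₀ y₀ pt hf hg hgf hpt1 hpt2 w, 1 - (t:ℝ))
          = PhiY f g y₀ hgf (w, clamp (1 - (t:ℝ))) := rfl
      rw [hloopY]
      simp only [PhiY, ContinuousMap.coe_mk, hclamp]
      split_ifs with h1 h2 h3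
      · -- t ≤ 1/2 and 1 - t ≤ 1/2 : forces t = 1/2
        have ht : (t:ℝ) = 1/2 := by linarith
        rw [hsnd_congr f y₀ _ (show (((1:I):ℝ)*(1 - 2*(t:ℝ))) = 0 by rw [ht]; norm_num),
          hsnd_congr f y₀ _ (show (1 - 2*(1 - (t:ℝ))) = 0 by rw [ht]; norm_num),
          hsnd_le_zero f y₀ _ le_rfl, hgf]
      · -- t ≤ 1/2, 1 - t > 1/2
        rw [hsnd_congr f y₀ _ (show (((1:I):ℝ)*(1 - 2*(t:ℝ))) = 2*(1 - (t:ℝ)) - 1 by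
          norm_num; ring)]
      · -- t > 1/2 : 1 - t ≤ 1/2
        exact hsnd_congr f y₀ _ (by ring)
      · exact absurd (by linarith) h3
  exact ⟨KR.trans Kmain⟩

end KHomotopy

section LHomotopy

variable {X Y : Type} [TopologicalSpace X] [TopologicalSpace Y]

/-- the `Y`-component of the intermediate loop map `E1` -/
def E1Y (f : C(X, Y)) (g : C(Y, X)) (x₀ : X) (y₀ : Y) (pt : HFiber g x₀)
    (hf : f x₀ = y₀) (hg : g y₀ = x₀) (hpt1 : pt.1.1 = y₀) (hpt2 : ∀ s : I, pt.1.2 s = x₀) :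
    C(LoopSp (HFiber g x₀) pt × I, Y) :=
  ⟨fun v => if ((v.2 : I) : ℝ) ≤ 1/2 then loopY g x₀ pt (v.1, 2*((v.2 : I) : ℝ))
    else f (g (loopY g x₀ pt (v.1, 2 - 2*((v.2 : I) : ℝ)))), by
    apply Continuous.if_le
    · exact (loopY g x₀ pt).continuous.comp (continuous_fst.prodMk (by fun_prop))
    · exact f.continuous.comp (g.continuous.comp ((loopY g x₀ pt).continuous.comp
        (continuous_fst.prodMk (by fun_prop))))
    · exact continuous_subtype_val.comp continuous_snd
    · exact continuous_const
    · intro v hv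
      rw [hv]
      rw [loopY_congr g x₀ pt _ (show 2*(1/2:ℝ) = 1 by ring),
        loopY_congr g x₀ pt _ (show 2 - 2*(1/2:ℝ) = 1 by ring),
        loopY_ge g x₀ pt hpt1 _ le_rfl, hg, hf]⟩

/-- the square component of the intermediate loop map `E1` -/
def E1S (g : C(Y, X)) (x₀ : X) (pt : HFiber g x₀) :
    C((LoopSp (HFiber g x₀) pt × I) × ℝ, X) :=
  ⟨fun q => g (loopY g x₀ pt (q.1.1,
      min (2*((q.1.2 : I) : ℝ)) (2 - 2*((q.1.2 : I) : ℝ)) * min 1 (2 - 2*q.2))),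
    g.continuous.comp ((loopY g x₀ pt).continuous.comp
      ((continuous_fst.comp continuous_fst).prodMk (by fun_prop)))⟩

/-- the intermediate loop map `E1` as a family of fiber points -/
def E1D (f : C(X, Y)) (g : C(Y, X)) (x₀ : X) (y₀ : Y) (pt : HFiber g x₀)
    (hf : f x₀ = y₀) (hg : g y₀ = x₀) (hgf : ∀ x, g (f x) = x)
    (hpt1 : pt.1.1 = y₀) (hpt2 : ∀ s : I, pt.1.2 s = x₀) :
    C(LoopSp (HFiber g x₀) pt × I, HFiber g x₀) :=
  toHFiber g x₀ (E1Y f g x₀ y₀ pt hf hg hpt1 hpt2) (E1S g x₀ pt)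
    (by
      intro v
      simp only [E1S, E1Y, ContinuousMap.coe_mk]
      rw [min_eq_left (by norm_num : (1:ℝ) ≤ 2 - 2*0), mul_one]
      rcases le_or_gt ((v.2 : I) : ℝ) (1/2) with h | h
      · rw [if_pos h, min_eq_left (by linarith)]
      · rw [if_neg (not_le.mpr h), min_eq_right (by linarith), hgf]
    )
    (by
      intro v
      simp only [E1S, ContinuousMap.coe_mk]
      rw [loopY_congr g x₀ pt _ (show
        min (2*((v.2 : I) : ℝ)) (2 - 2*((v.2 : I) : ℝ)) * min 1 (2 - 2*1) = 0 by
          rw [show (2 - 2*(1:ℝ)) = 0 by ring, min_eq_right (by norm_num : (0:ℝ) ≤ 1), mul_zero]),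
        loopY_le g x₀ pt hpt1 _ le_rfl, hg])

/-- the intermediate loop map `E1` -/
def E1Map (f : C(X, Y)) (g : C(Y, X)) (x₀ : X) (y₀ : Y) (pt : HFiber g x₀)
    (hf : f x₀ = y₀) (hg : g y₀ = x₀) (hgf : ∀ x, g (f x) = x)
    (hpt1 : pt.1.1 = y₀) (hpt2 : ∀ s : I, pt.1.2 s = x₀) :
    C(LoopSp (HFiber g x₀) pt, LoopSp (HFiber g x₀) pt) :=
  toLoopSp (E1D f g x₀ y₀ pt hf hg hgf hpt1 hpt2)
    (by
      intro δ
      refine hfiber_ext g x₀ ?_ ?_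
      · show E1Y f g x₀ y₀ pt hf hg hpt1 hpt2 (δ, 0) = pt.1.1
        simp only [E1Y, ContinuousMap.coe_mk]
        rw [if_pos (by norm_num : ((0:I) : ℝ) ≤ 1/2),
          loopY_le g x₀ pt hpt1 _ (by norm_num), hpt1]
      · intro s
        show E1S g x₀ pt ((δ, 0), (s : ℝ)) = pt.1.2 s
        simp only [E1S, ContinuousMap.coe_mk]
        rw [loopY_congr g x₀ pt _ (show
          min (2*((0:I) : ℝ)) (2 - 2*((0:I) : ℝ)) * min 1 (2 - 2*(s:ℝ)) = 0 by
            norm_num), loopY_le g x₀ pt hpt1 _ le_rfl, hg, hpt2])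
    (by
      intro δ
      refine hfiber_ext g x₀ ?_ ?_
      · show E1Y f g x₀ y₀ pt hf hg hpt1 hpt2 (δ, 1) = pt.1.1
        simp only [E1Y, ContinuousMap.coe_mk]
        rw [if_neg (by norm_num : ¬ (((1:I) : ℝ) ≤ 1/2)),
          loopY_le g x₀ pt hpt1 _ (by norm_num), hg, hf, hpt1]
      · intro s
        show E1S g x₀ pt ((δ, 1), (s : ℝ)) = pt.1.2 s
        simp only [E1S, ContinuousMap.coe_mk]
        rw [loopY_congr g x₀ pt _ (show
          min (2*((1:I) : ℝ)) (2 - 2*((1:I) : ℝ)) * min 1 (2 - 2*(s:ℝ)) = 0 by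
            norm_num), loopY_le g x₀ pt hpt1 _ le_rfl, hg, hpt2])

/-- the intermediate loop map `E2` as a family of fiber points -/
def E2D (g : C(Y, X)) (x₀ : X) (pt : HFiber g x₀) :
    C(LoopSp (HFiber g x₀) pt × I, HFiber g x₀) :=
  toHFiber g x₀
    ⟨fun v => loopY g x₀ pt (v.1, 2*((v.2 : I) : ℝ)),
      (loopY g x₀ pt).continuous.comp (continuous_fst.prodMk (by fun_prop))⟩
    ⟨fun q => loopS g x₀ pt (q.1.1, (2*((q.1.2 : I) : ℝ), 2*q.2)),
      (loopS g x₀ pt).continuous.comp ((continuous_fst.comp continuous_fst).prodMk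
        (by fun_prop))⟩
    (fun v => by
      simp only [ContinuousMap.coe_mk]
      rw [loopS_s0 g x₀ pt _ _ (by norm_num : 2*(0:ℝ) ≤ 0)])
    (fun v => by
      simp only [ContinuousMap.coe_mk]
      rw [loopS_s1 g x₀ pt _ _ (by norm_num : (1:ℝ) ≤ 2*1)])

/-- the intermediate loop map `E2` -/
def E2Map (g : C(Y, X)) (x₀ : X) {y₀ : Y} (pt : HFiber g x₀)
    (hpt1 : pt.1.1 = y₀) (hpt2 : ∀ s : I, pt.1.2 s = x₀) :
    C(LoopSp (HFiber g x₀) pt, LoopSp (HFiber g x₀) pt) :=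
  toLoopSp (E2D g x₀ pt)
    (by
      intro δ
      refine hfiber_ext g x₀ ?_ ?_
      · show loopY g x₀ pt (δ, 2*((0:I) : ℝ)) = pt.1.1
        rw [loopY_le g x₀ pt hpt1 _ (by norm_num), hpt1]
      · intro s
        show loopS g x₀ pt (δ, (2*((0:I) : ℝ), 2*(s:ℝ))) = pt.1.2 s
        rw [loopS_t0 g x₀ pt hpt2 _ (by norm_num) _, hpt2])
    (by
      intro δ
      refine hfiber_ext g x₀ ?_ ?_
      · show loopY g x₀ pt (δ, 2*((1:I) : ℝ)) = pt.1.1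
        rw [loopY_ge g x₀ pt hpt1 _ (by norm_num), hpt1]
      · intro s
        show loopS g x₀ pt (δ, (2*((1:I) : ℝ), 2*(s:ℝ))) = pt.1.2 s
        rw [loopS_t1 g x₀ pt hpt2 _ (by norm_num) _, hpt2])

end LHomotopy

section LStages

variable {X Y : Type} [TopologicalSpace X] [TopologicalSpace Y]

lemma L3_homotopy (f : C(X, Y)) (g : C(Y, X)) (x₀ : X) (y₀ : Y) (pt : HFiber g x₀)
    (hpt1 : pt.1.1 = y₀) (hpt2 : ∀ s : I, pt.1.2 s = x₀) :
    Nonempty ((E2Map g x₀ pt hpt1 hpt2).Homotopy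
      (ContinuousMap.id (LoopSp (HFiber g x₀) pt))) := by
  refine ⟨mkLoopHomotopy _ _ (toHFiber g x₀
    ⟨fun v => loopY g x₀ pt (v.1.2, (2 - (v.1.1 : ℝ)) * ((v.2 : I) : ℝ)),
      (loopY g x₀ pt).continuous.comp ((continuous_snd.comp continuous_fst).prodMk
        (by fun_prop))⟩
    ⟨fun q => loopS g x₀ pt (q.1.1.2, ((2 - (q.1.1.1 : ℝ)) * ((q.1.2 : I) : ℝ),
        (2 - (q.1.1.1 : ℝ)) * q.2)),
      (loopS g x₀ pt).continuous.comp (((continuous_snd.comp continuous_fst).comp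
        continuous_fst).prodMk (by fun_prop))⟩
    ?_ ?_) ?_ ?_ ?_ ?_⟩
  · intro q
    simp only [ContinuousMap.coe_mk]
    rw [loopS_s0 g x₀ pt _ _ (le_of_eq (by ring))]
  · intro q
    simp only [ContinuousMap.coe_mk]
    rw [loopS_s1 g x₀ pt _ _ (show (1:ℝ) ≤ (2 - (q.1.1 : ℝ))*1 by
      nlinarith [(Prod.fst (Prod.fst q)).2.2])]
  · intro q
    refine hfiber_ext g x₀ ?_ ?_
    · show loopY g x₀ pt (q.2, (2 - (q.1 : ℝ)) * ((0:I) : ℝ)) = pt.1.1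
      rw [loopY_le g x₀ pt hpt1 _ (le_of_eq (by norm_num)), hpt1]
    · intro s
      show loopS g x₀ pt (q.2, ((2 - (q.1 : ℝ)) * ((0:I) : ℝ), (2 - (q.1 : ℝ)) * (s:ℝ)))
        = pt.1.2 s
      rw [loopS_t0 g x₀ pt hpt2 _ (le_of_eq (by norm_num)) _, hpt2]
  · intro q
    refine hfiber_ext g x₀ ?_ ?_
    · show loopY g x₀ pt (q.2, (2 - (q.1 : ℝ)) * ((1:I) : ℝ)) = pt.1.1
      rw [loopY_ge g x₀ pt hpt1 _ (show (1:ℝ) ≤ (2 - (q.1 : ℝ)) * ((1:I) : ℝ) by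
        rw [show ((1:I) : ℝ) = 1 from rfl]; nlinarith [(q.1 : I).2.2]), hpt1]
    · intro s
      show loopS g x₀ pt (q.2, ((2 - (q.1 : ℝ)) * ((1:I) : ℝ), (2 - (q.1 : ℝ)) * (s:ℝ)))
        = pt.1.2 s
      rw [loopS_t1 g x₀ pt hpt2 _ (show (1:ℝ) ≤ (2 - (q.1 : ℝ)) * ((1:I) : ℝ) by
        rw [show ((1:I) : ℝ) = 1 from rfl]; nlinarith [(q.1 : I).2.2]) _, hpt2]
  · intro δ t
    refine hfiber_ext g x₀ ?_ ?_
    · exact loopY_congr g x₀ pt δ (by rw [show ((0:I) : ℝ) = 0 from rfl]; ring)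
    · intro s
      exact loopS_congr g x₀ pt δ (by rw [show ((0:I) : ℝ) = 0 from rfl]; ring)
        (by rw [show ((0:I) : ℝ) = 0 from rfl]; ring)
  · intro δ t
    refine hfiber_ext g x₀ ?_ ?_
    · exact (loopY_congr g x₀ pt δ (by rw [show ((1:I) : ℝ) = 1 from rfl]; ring)).trans
        (loopY_coe g x₀ pt δ t)
    · intro s
      exact (loopS_congr g x₀ pt δ (by rw [show ((1:I) : ℝ) = 1 from rfl]; ring)
        (by rw [show ((1:I) : ℝ) = 1 from rfl]; ring)).trans (loopS_coe g x₀ pt δ t s)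

lemma L2_homotopy (f : C(X, Y)) (g : C(Y, X)) (x₀ : X) (y₀ : Y) (pt : HFiber g x₀)
    (hf : f x₀ = y₀) (hg : g y₀ = x₀) (hgf : ∀ x, g (f x) = x)
    (hpt1 : pt.1.1 = y₀) (hpt2 : ∀ s : I, pt.1.2 s = x₀) :
    Nonempty ((E1Map f g x₀ y₀ pt hf hg hgf hpt1 hpt2).Homotopy
      (E2Map g x₀ pt hpt1 hpt2)) := by
  have Ycont : Continuous (fun v : (I × LoopSp (HFiber g x₀) pt) × I =>
      if ((v.2 : I) : ℝ) ≤ 1/2 then loopY g x₀ pt (v.1.2, 2*((v.2 : I) : ℝ))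
      else f (loopS g x₀ pt (v.1.2, (2 - 2*((v.2 : I) : ℝ), (v.1.1 : ℝ))))) := by
    apply Continuous.if_le
    · exact (loopY g x₀ pt).continuous.comp ((continuous_snd.comp continuous_fst).prodMk
        (by fun_prop))
    · exact f.continuous.comp ((loopS g x₀ pt).continuous.comp
        ((continuous_snd.comp continuous_fst).prodMk (by fun_prop)))
    · exact continuous_subtype_val.comp continuous_snd
    · exact continuous_const
    · intro v hv
      rw [hv]
      rw [loopY_congr g x₀ pt _ (show 2*(1/2:ℝ) = 1 by ring), loopY_ge g x₀ pt hpt1 _ le_rfl,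
        loopS_t1 g x₀ pt hpt2 _ (by norm_num) _, hf]
  set YCL2 : C((I × LoopSp (HFiber g x₀) pt) × I, Y) := ⟨_, Ycont⟩ with hYCL2
  have Scont : Continuous (fun q : ((I × LoopSp (HFiber g x₀) pt) × I) × ℝ =>
      if q.2 ≤ 1/2 then
        (if ((q.1.2 : I) : ℝ) ≤ 1/2 then
          loopS g x₀ pt (q.1.1.2, (2*((q.1.2 : I) : ℝ), 2*q.2*(q.1.1.1 : ℝ)))
        else loopS g x₀ pt (q.1.1.2, (2 - 2*((q.1.2 : I) : ℝ), (q.1.1.1 : ℝ))))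
      else loopS g x₀ pt (q.1.1.2,
        (min (2*((q.1.2 : I) : ℝ)) (2 - 2*((q.1.2 : I) : ℝ)) * (2 - 2*q.2), (q.1.1.1 : ℝ)))) := by
    apply Continuous.if_le
    · apply Continuous.if_le
      · exact (loopS g x₀ pt).continuous.comp (((continuous_snd.comp continuous_fst).comp
          continuous_fst).prodMk (by fun_prop))
      · exact (loopS g x₀ pt).continuous.comp (((continuous_snd.comp continuous_fst).comp
          continuous_fst).prodMk (by fun_prop))
      · exact continuous_subtype_val.comp (continuous_snd.comp continuous_fst)
      · exact continuous_const
      · intro q hq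
        rw [hq]
        rw [loopS_t1 g x₀ pt hpt2 _ (by norm_num) _, loopS_t1 g x₀ pt hpt2 _ (by norm_num) _]
    · exact (loopS g x₀ pt).continuous.comp (((continuous_snd.comp continuous_fst).comp
        continuous_fst).prodMk (by fun_prop))
    · exact continuous_snd
    · exact continuous_const
    · intro q hq
      rw [hq]
      split_ifs with h
      · exact loopS_congr g x₀ pt _ (by rw [min_eq_left (by linarith)]; ring)
          (by ring)
      · exact loopS_congr g x₀ pt _ (by rw [min_eq_right (by linarith)]; ring) rfl
  set SCL2 : C(((I × LoopSp (HFiber g x₀) pt) × I) × ℝ, X) := ⟨_, Scont⟩ with hSCL2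
  refine ⟨mkLoopHomotopy _ _ (toHFiber g x₀ YCL2 SCL2 ?_ ?_) ?_ ?_ ?_ ?_⟩
  · intro q
    simp only [hYCL2, hSCL2, ContinuousMap.coe_mk]
    rw [if_pos (by norm_num : (0:ℝ) ≤ 1/2)]
    split_ifs with h
    · rw [loopS_s0 g x₀ pt _ _ (le_of_eq (by ring))]
    · rw [hgf]
  · intro q
    simp only [hYCL2, hSCL2, ContinuousMap.coe_mk]
    rw [if_neg (by norm_num : ¬ ((1:ℝ) ≤ 1/2)),
      loopS_t0 g x₀ pt hpt2 _ (le_of_eq (by ring)) _]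
  · intro q
    refine hfiber_ext g x₀ ?_ ?_
    · show YCL2 (q, 0) = pt.1.1
      simp only [hYCL2, ContinuousMap.coe_mk]
      rw [if_pos (by norm_num : ((0:I) : ℝ) ≤ 1/2),
        loopY_le g x₀ pt hpt1 _ (by norm_num), hpt1]
    · intro s
      show SCL2 ((q, 0), (s:ℝ)) = pt.1.2 s
      simp only [hSCL2, ContinuousMap.coe_mk]
      split_ifs with h1 h2
      · rw [loopS_t0 g x₀ pt hpt2 _ (by norm_num) _, hpt2]
      · exact absurd (by norm_num) h2
      · rw [loopS_t0 g x₀ pt hpt2 _ (le_of_eq (by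
          rw [show ((0:I) : ℝ) = 0 from rfl]
          rw [min_eq_left (by norm_num : (2*(0:ℝ)) ≤ 2 - 2*0)]
          ring)) _, hpt2]
  · intro q
    refine hfiber_ext g x₀ ?_ ?_
    · show YCL2 (q, 1) = pt.1.1
      simp only [hYCL2, ContinuousMap.coe_mk]
      rw [if_neg (by norm_num : ¬ (((1:I) : ℝ) ≤ 1/2)),
        loopS_t0 g x₀ pt hpt2 _ (by norm_num) _, hf, hpt1]
    · intro s
      show SCL2 ((q, 1), (s:ℝ)) = pt.1.2 s
      simp only [hSCL2, ContinuousMap.coe_mk]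
      split_ifs with h1 h2
      · exact absurd h2 (by norm_num)
      · rw [loopS_t0 g x₀ pt hpt2 _ (by norm_num) _, hpt2]
      · rw [loopS_t0 g x₀ pt hpt2 _ (le_of_eq (by
          rw [show ((1:I) : ℝ) = 1 from rfl]
          rw [min_eq_right (by norm_num : (2 - 2*(1:ℝ)) ≤ 2*1)]
          ring)) _, hpt2]
  · -- v = 0 : agrees with E1
    intro δ t
    refine hfiber_ext g x₀ ?_ ?_
    · show YCL2 ((0, δ), t) = ((E1Map f g x₀ y₀ pt hf hg hgf hpt1 hpt2 δ).1 t).1.1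
      simp only [hYCL2, ContinuousMap.coe_mk, E1Map, E1D, toLoopSp_apply, toHFiber_fst,
        E1Y]
      split_ifs with h
      · rfl
      · rw [loopS_s0 g x₀ pt _ _ (by norm_num)]
    · intro s
      show SCL2 (((0, δ), t), (s:ℝ)) = ((E1Map f g x₀ y₀ pt hf hg hgf hpt1 hpt2 δ).1 t).1.2 s
      simp only [hSCL2, ContinuousMap.coe_mk, E1Map, E1D, toLoopSp_apply, toHFiber_snd,
        E1S]
      split_ifs with h1 h2
      · rw [loopS_s0 g x₀ pt _ _ (le_of_eq (by rw [show ((0:I) : ℝ) = 0 from rfl]; ring))]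
        exact congrArg g (loopY_congr g x₀ pt δ (by
          rw [min_eq_left (by linarith), min_eq_left (by linarith), mul_one]))
      · rw [loopS_s0 g x₀ pt _ _ (by norm_num)]
        exact congrArg g (loopY_congr g x₀ pt δ (by
          rw [min_eq_right (by linarith), min_eq_left (by linarith), mul_one]))
      · rw [loopS_s0 g x₀ pt _ _ (by norm_num)]
        exact congrArg g (loopY_congr g x₀ pt δ (by
          rw [min_eq_right (by linarith : (2 - 2*(s:ℝ)) ≤ 1)]))
  · -- v = 1 : agrees with E2
    intro δ t
    refine hfiber_ext g x₀ ?_ ?_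
    · show YCL2 ((1, δ), t) = ((E2Map g x₀ pt hpt1 hpt2 δ).1 t).1.1
      simp only [hYCL2, ContinuousMap.coe_mk, E2Map, E2D, toLoopSp_apply, toHFiber_fst]
      split_ifs with h
      · rfl
      · rw [loopS_s1 g x₀ pt _ _ (by norm_num), hf,
          loopY_ge g x₀ pt hpt1 _ (by linarith)]
    · intro s
      show SCL2 (((1, δ), t), (s:ℝ)) = ((E2Map g x₀ pt hpt1 hpt2 δ).1 t).1.2 s
      simp only [hSCL2, ContinuousMap.coe_mk, E2Map, E2D, toLoopSp_apply, toHFiber_snd]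
      split_ifs with h1 h2
      · exact loopS_congr g x₀ pt δ rfl (by rw [show ((1:I) : ℝ) = 1 from rfl]; ring)
      · rw [loopS_s1 g x₀ pt _ _ (by norm_num),
          loopS_t1 g x₀ pt hpt2 _ (by linarith) _]
      · rw [loopS_s1 g x₀ pt _ _ (by norm_num),
          loopS_s1 g x₀ pt _ _ (by linarith)]
  
end LStages

section L1Stage

variable {X Y : Type} [TopologicalSpace X] [TopologicalSpace Y]

lemma L1_homotopy (f : C(X, Y)) (g : C(Y, X)) (x₀ : X) (y₀ : Y) (pt : HFiber g x₀)
    (hf : f x₀ = y₀) (hg : g y₀ = x₀) (hgf : ∀ x, g (f x) = x)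
    (hpt1 : pt.1.1 = y₀) (hpt2 : ∀ s : I, pt.1.2 s = x₀) :
    Nonempty (((PhiMap f g x₀ y₀ pt hf hg hgf hpt1 hpt2).comp
        (PsiMap f g x₀ y₀ pt hf hpt1)).Homotopy
      (E1Map f g x₀ y₀ pt hf hg hgf hpt1 hpt2)) := by
  have hpsi : ∀ (δ : LoopSp (HFiber g x₀) pt) (r : ℝ),
      hsnd f y₀ (PsiMap f g x₀ y₀ pt hf hpt1 δ, r)
        = loopY g x₀ pt (δ, 1 - ((clamp r : I) : ℝ)) := fun _ _ => rfl
  set YCL1 : C((I × LoopSp (HFiber g x₀) pt) × I, Y) :=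
    (E1Y f g x₀ y₀ pt hf hg hpt1 hpt2).comp
      ⟨fun q => (q.1.2, q.2), (continuous_snd.comp continuous_fst).prodMk continuous_snd⟩
    with hYCL1
  set SCL1 : C(((I × LoopSp (HFiber g x₀) pt) × I) × ℝ, X) :=
    ⟨fun q => g (loopY g x₀ pt (q.1.1.2,
      min (2*((q.1.2 : I) : ℝ)) (2 - 2*((q.1.2 : I) : ℝ)) *
        min 1 ((1 - (q.1.1.1 : ℝ))*(1 - q.2) + (q.1.1.1 : ℝ)*(2 - 2*q.2)))),
      g.continuous.comp ((loopY g x₀ pt).continuous.comp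
        (((continuous_snd.comp continuous_fst).comp continuous_fst).prodMk (by fun_prop)))⟩
    with hSCL1
  refine ⟨mkLoopHomotopy _ _ (toHFiber g x₀ YCL1 SCL1 ?_ ?_) ?_ ?_ ?_ ?_⟩
  · intro q
    simp only [hYCL1, hSCL1, ContinuousMap.coe_mk, ContinuousMap.comp_apply, E1Y]
    rw [show ((1 - (q.1.1 : ℝ))*((1:ℝ) - 0) + (q.1.1 : ℝ)*(2 - 2*0)) = 1 + (q.1.1 : ℝ) by ring,
      min_eq_left (by linarith [(Prod.fst (Prod.fst q)).2.1] : (1:ℝ) ≤ 1 + (q.1.1 : ℝ)),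
      mul_one]
    rcases le_or_gt ((q.2 : I) : ℝ) (1/2) with h | h
    · rw [if_pos h, min_eq_left (by linarith)]
    · rw [if_neg (not_le.mpr h), min_eq_right (by linarith), hgf]
  · intro q
    simp only [hSCL1, ContinuousMap.coe_mk]
    rw [show ((1 - (q.1.1 : ℝ))*((1:ℝ) - 1) + (q.1.1 : ℝ)*(2 - 2*1)) = 0 by ring,
      min_eq_right (by norm_num : (0:ℝ) ≤ 1), mul_zero,
      loopY_le g x₀ pt hpt1 _ le_rfl, hg]
  · intro q
    refine hfiber_ext g x₀ ?_ ?_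
    · show YCL1 (q, 0) = pt.1.1
      simp only [hYCL1, ContinuousMap.coe_mk, ContinuousMap.comp_apply, E1Y]
      rw [if_pos (by norm_num : ((0:I) : ℝ) ≤ 1/2),
        loopY_le g x₀ pt hpt1 _ (by norm_num), hpt1]
    · intro s
      show SCL1 ((q, 0), (s:ℝ)) = pt.1.2 s
      simp only [hSCL1, ContinuousMap.coe_mk]
      rw [loopY_le g x₀ pt hpt1 _ (le_of_eq (by
        rw [show ((0:I) : ℝ) = 0 from rfl,
          min_eq_left (by norm_num : (2*(0:ℝ)) ≤ 2 - 2*0)]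
        ring)), hg, hpt2]
  · intro q
    refine hfiber_ext g x₀ ?_ ?_
    · show YCL1 (q, 1) = pt.1.1
      simp only [hYCL1, ContinuousMap.coe_mk, ContinuousMap.comp_apply, E1Y]
      rw [if_neg (by norm_num : ¬ (((1:I) : ℝ) ≤ 1/2)),
        loopY_le g x₀ pt hpt1 _ (by norm_num), hg, hf, hpt1]
    · intro s
      show SCL1 ((q, 1), (s:ℝ)) = pt.1.2 s
      simp only [hSCL1, ContinuousMap.coe_mk]
      rw [loopY_le g x₀ pt hpt1 _ (le_of_eq (by
        rw [show ((1:I) : ℝ) = 1 from rfl,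
          min_eq_right (by norm_num : (2 - 2*(1:ℝ)) ≤ 2*1)]
        ring)), hg, hpt2]
  · -- v = 0 : agrees with Φ ∘ Ψ
    intro δ t
    have ht0 : (0:ℝ) ≤ (t:ℝ) := t.2.1
    have ht1 : (t:ℝ) ≤ 1 := t.2.2
    refine hfiber_ext g x₀ ?_ ?_
    · show YCL1 ((0, δ), t)
        = (((PhiMap f g x₀ y₀ pt hf hg hgf hpt1 hpt2).comp
            (PsiMap f g x₀ y₀ pt hf hpt1) δ).1 t).1.1
      simp only [hYCL1, ContinuousMap.coe_mk, ContinuousMap.comp_apply, E1Y,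
        PhiMap, toLoopSp_apply, PhiD, toHFiber_fst, PhiY]
      split_ifs with h
      · rw [hpsi δ (1 - 2*(t:ℝ))]
        exact loopY_congr g x₀ pt δ (by
          rw [clamp_coe_mem (by linarith) (by linarith)]; ring)
      · rw [hpsi δ (2*(t:ℝ) - 1)]
        refine congrArg f (congrArg g ?_)
        exact loopY_congr g x₀ pt δ (by
          rw [clamp_coe_mem (by linarith) (by linarith)]; ring)
    · intro s
      have hs0 : (0:ℝ) ≤ (s:ℝ) := s.2.1
      have hs1 : (s:ℝ) ≤ 1 := s.2.2
      show SCL1 (((0, δ), t), (s:ℝ))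
        = (((PhiMap f g x₀ y₀ pt hf hg hgf hpt1 hpt2).comp
            (PsiMap f g x₀ y₀ pt hf hpt1) δ).1 t).1.2 s
      simp only [hSCL1, ContinuousMap.coe_mk, ContinuousMap.comp_apply,
        PhiMap, toLoopSp_apply, PhiD, toHFiber_snd, PhiS]
      rw [hpsi δ]
      have hτ0 : (0:ℝ) ≤ |1 - 2*(t:ℝ)| := abs_nonneg _
      have hτ1 : |1 - 2*(t:ℝ)| ≤ 1 := abs_le.mpr ⟨by linarith, by linarith⟩
      rw [clamp_coe_mem (by nlinarith) (by nlinarith)]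
      refine congrArg g ?_
      refine loopY_congr g x₀ pt δ ?_
      rw [show ((1 - ((0:I) : ℝ))*(1 - (s:ℝ)) + ((0:I) : ℝ)*(2 - 2*(s:ℝ))) = 1 - (s:ℝ) by
        rw [show ((0:I) : ℝ) = 0 from rfl]; ring,
        min_eq_right (by linarith : 1 - (s:ℝ) ≤ 1), min_eq_one_sub_abs]
      ring
  · -- v = 1 : agrees with E1
    intro δ t
    refine hfiber_ext g x₀ ?_ ?_
    · rfl
    · intro s
      show SCL1 (((1, δ), t), (s:ℝ))
        = ((E1Map f g x₀ y₀ pt hf hg hgf hpt1 hpt2 δ).1 t).1.2 s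
      simp only [hSCL1, ContinuousMap.coe_mk, E1Map, toLoopSp_apply,
        E1D, toHFiber_snd, E1S]
      refine congrArg g ?_
      exact loopY_congr g x₀ pt δ (by
        rw [show ((1:I) : ℝ) = 1 from rfl]; ring_nf)

end L1Stage
theorem stmt0 {X Y : Type} [TopologicalSpace X] [TopologicalSpace Y] (x₀ : X) (y₀ : Y)
    (f : C(X, Y)) (g : C(Y, X)) (hf : f x₀ = y₀) (hg : g y₀ = x₀)
    (hgf : ∀ x, g (f x) = x) :
    WeakHomotopyEquivalent (HFiber f y₀)
      (LoopSp (HFiber g x₀) (@id (HFiber g x₀) ⟨(y₀, ContinuousMap.const I x₀), by simp [hg], rfl⟩)) := by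
  set pt : HFiber g x₀ := ⟨(y₀, ContinuousMap.const I x₀), by simp [hg], rfl⟩ with hpt
  have hpt1 : pt.1.1 = y₀ := rfl
  have hpt2 : ∀ s : I, pt.1.2 s = x₀ := fun _ => rfl
  left
  refine ⟨PhiMap f g x₀ y₀ pt hf hg hgf hpt1 hpt2, ?_⟩
  intro k δ
  obtain ⟨Kh⟩ := K_homotopy f g x₀ y₀ pt hf hg hgf hpt1 hpt2
  obtain ⟨h1⟩ := L1_homotopy f g x₀ y₀ pt hf hg hgf hpt1 hpt2
  obtain ⟨h2⟩ := L2_homotopy f g x₀ y₀ pt hf hg hgf hpt1 hpt2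
  obtain ⟨h3⟩ := L3_homotopy f g x₀ y₀ pt hpt1 hpt2
  have Lh := (h1.trans h2).trans h3
  exact isConnSpace_of_ctr (ctr_hfiber_of_hequiv
    (PhiMap f g x₀ y₀ pt hf hg hgf hpt1 hpt2) (PsiMap f g x₀ y₀ pt hf hpt1)
    Kh.toContinuousMap (fun a => Kh.apply_zero a) (fun a => Kh.apply_one a)
    Lh.toContinuousMap (fun b => Lh.apply_zero b) (fun b => Lh.apply_one b) δ) _
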